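/- arXiv:1512.04200 — 8 statements merged into one kernel-verified Lean document; each statement's English description precedes it below -/
import Mathlib

section
/- Let G be a finite simple graph and let Q = (Q1,Q2) and P = (P1,P2) be two partitions of the vertex set of G such that Q1 can be partitioned into r' independent sets of G and Q2 can be partitioned into ℓ' cliques of G, while P1 can be partitioned into r independent sets of G and P2 can be partitioned into ℓ cliques of G. Then |Q1 ∩ P2| + |Q2 ∩ P1| ≤ r'·ℓ + r·ℓ'. -/
variable {V : Type*}

/-- A set of vertices is an *independent set*: no two of its vertices are adjacent. -/
def IndepSet (G : SimpleGraph V) (s : Set V) : Prop :=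
  s.Pairwise fun u v => ¬ G.Adj u v

/-- The set `W` can be partitioned into `r` (pairwise disjoint) independent sets of `G`. -/
def PartitionIntoIndepSets (r : ℕ) (G : SimpleGraph V) (W : Set V) : Prop :=
  ∃ I : Fin r → Set V, (⋃ i, I i) = W ∧ Pairwise (Function.onFun Disjoint I) ∧
    ∀ i, IndepSet G (I i)

/-- The set `W` can be partitioned into `l` (pairwise disjoint) cliques of `G`. -/
def PartitionIntoCliques (l : ℕ) (G : SimpleGraph V) (W : Set V) : Prop :=
  ∃ K : Fin l → Set V, (⋃ j, K j) = W ∧ Pairwise (Function.onFun Disjoint K) ∧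
    ∀ j, G.IsClique (K j)

/-- `(V1, V2)` is an IC-partition of the ground set `W` in `G`: `V1` and `V2` partition `W`,
`V1` is partitioned into `r` independent sets and `V2` into `l` cliques. -/
def IsICPartitionOn (r l : ℕ) (G : SimpleGraph V) (W V1 V2 : Set V) : Prop :=
  Disjoint V1 V2 ∧ V1 ∪ V2 = W ∧
    PartitionIntoIndepSets r G V1 ∧ PartitionIntoCliques l G V2

/-- `(V1, V2)` is an IC-partition of `G` realizing that `G` is an `(r,l)`-graph. -/
def IsICPartition (r l : ℕ) (G : SimpleGraph V) (V1 V2 : Set V) : Prop :=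
  IsICPartitionOn r l G Set.univ V1 V2

/-- `G` is an `(r,l)`-graph: its vertex set can be partitioned into `r` independent sets
and `l` cliques. -/
def IsRLGraph (r l : ℕ) (G : SimpleGraph V) : Prop :=
  ∃ V1 V2 : Set V, IsICPartition r l G V1 V2

lemma ncard_biUnion_le' {α ι : Type*} [Fintype α] (t : Finset ι) (s : ι → Set α) :
    (⋃ i ∈ t, s i).ncard ≤ ∑ i ∈ t, (s i).ncard := by
  classical
  induction t using Finset.induction with
  | empty => simp
  | insert _ _ h ih =>
    rw [Finset.sum_insert h, Finset.set_biUnion_insert]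
    exact le_trans (Set.ncard_union_le _ _) (by omega)

lemma inter_ncard_le {V : Type*} [Fintype V] (G : SimpleGraph V) (r l : ℕ) (A B : Set V)
    (hA : PartitionIntoIndepSets r G A) (hB : PartitionIntoCliques l G B) :
    (A ∩ B).ncard ≤ r * l := by
  obtain ⟨I, hIu, -, hI⟩ := hA
  obtain ⟨K, hKu, -, hK⟩ := hB
  have heq : A ∩ B = ⋃ p ∈ (Finset.univ : Finset (Fin r × Fin l)), (I p.1 ∩ K p.2) := by
    rw [← hIu, ← hKu]
    ext x
    simp only [Set.mem_inter_iff, Set.mem_iUnion, Finset.mem_univ, Set.iUnion_true]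
    constructor
    · rintro ⟨⟨i, hi⟩, ⟨j, hj⟩⟩; exact ⟨⟨i, j⟩, hi, hj⟩
    · rintro ⟨⟨i, j⟩, hi, hj⟩; exact ⟨⟨i, hi⟩, ⟨j, hj⟩⟩
  rw [heq]
  calc (⋃ p ∈ (Finset.univ : Finset (Fin r × Fin l)), (I p.1 ∩ K p.2)).ncard
      ≤ ∑ p : Fin r × Fin l, (I p.1 ∩ K p.2).ncard := ncard_biUnion_le' _ _
    _ ≤ ∑ _p : Fin r × Fin l, 1 := by
        apply Finset.sum_le_sum
        intro p _
        apply (Set.ncard_le_one_iff (Set.toFinite _)).mpr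
        rintro a b ⟨haI, haK⟩ ⟨hbI, hbK⟩
        by_contra hab
        exact hI p.1 haI hbI hab (hK p.2 haK hbK hab)
    _ = r * l := by simp [mul_comm]

/-- if `(Q1,Q2)` is an IC-partition realizing that `G` is an `(r',l')`-graph
and `(P1,P2)` is an IC-partition realizing that `G` is an `(r,l)`-graph, then the number of
vertices placed on different sides by the two partitions is at most `r'·l + r·l'`. -/
theorem hamming_distance_bound {V : Type*} [Fintype V] (G : SimpleGraph V)
    (r l r' l' : ℕ) (Q1 Q2 P1 P2 : Set V)
    (hQ : IsICPartition r' l' G Q1 Q2) (hP : IsICPartition r l G P1 P2) :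
    (Q1 ∩ P2).ncard + (Q2 ∩ P1).ncard ≤ r' * l + r * l' := by
  exact add_le_add (inter_ncard_le G r' l Q1 P2 hQ.2.2.1 hP.2.2.2)
    (by rw [Set.inter_comm]; exact inter_ncard_le G r l' P1 Q2 hP.2.2.1 hQ.2.2.2)
end

section
/- Let G be a finite simple perfect graph and let ℓ be a nonnegative integer. Then either the vertex set of G can be partitioned into at most ℓ cliques, or G contains an independent set of size ℓ + 1. -/
variable {V : Type*}

/-- A graph is *perfect* if for every induced subgraph the chromatic number equals the
clique number. -/
def IsPerfect (G : SimpleGraph V) : Prop :=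
  ∀ W : Set V, (G.induce W).chromaticNumber = ((G.induce W).cliqueNum : ℕ∞)

set_option linter.unusedSectionVars false

section Aux
variable [Fintype V] [DecidableEq V] (G : SimpleGraph V)

open Finset

open Classical in
noncomputable def maxCW (k : V → ℕ) : ℕ :=
  (univ.powerset.filter (fun Q : Finset V => G.IsClique (Q : Set V))).sup
    (fun Q => ∑ v ∈ Q, k v)

open Classical in
lemma clique_wt_le {Q : Finset V} (hQ : G.IsClique (Q : Set V)) (k : V → ℕ) :
    ∑ v ∈ Q, k v ≤ maxCW G k :=
  Finset.le_sup (f := fun Q : Finset V => ∑ v ∈ Q, k v)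
    (by simp only [Finset.mem_filter, Finset.mem_powerset]; exact ⟨Finset.subset_univ _, hQ⟩)

open Classical in
lemma maxCW_mono {k k' : V → ℕ} (h : ∀ v, k' v ≤ k v) : maxCW G k' ≤ maxCW G k := by
  apply Finset.sup_le
  intro Q hQ
  simp only [Finset.mem_filter] at hQ
  exact le_trans (Finset.sum_le_sum fun v _ => h v) (clique_wt_le G hQ.2 k)

lemma indep_inter_clique {A Q : Finset V} (hA : IndepSet G (A : Set V))
    (hQ : G.IsClique (Q : Set V)) : (Q ∩ A).card ≤ 1 := by
  rw [Finset.card_le_one]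
  intro a ha b hb
  simp only [Finset.mem_inter] at ha hb
  by_contra hab
  exact hA (by exact_mod_cast ha.2) (by exact_mod_cast hb.2) hab
    (hQ (by exact_mod_cast ha.1) (by exact_mod_cast hb.1) hab)

/-- Base case: 0/1 weights, directly from perfection. -/
lemma weighted_base (hG : IsPerfect G) (k : V → ℕ) (hk : ∀ v, k v ≤ 1) :
    ∃ (n : ℕ) (C : Fin n → Finset V), n ≤ maxCW G k ∧
      (∀ i, IndepSet G ((C i : Finset V) : Set V)) ∧
      (∀ i v, v ∈ C i → k v ≠ 0) ∧
      (∀ v, k v ≤ ∑ i, if v ∈ C i then 1 else 0) := by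
  set W : Set V := {v | k v = 1} with hW
  haveI : DecidablePred (· ∈ W) := fun v => by
    simp only [hW, Set.mem_setOf_eq]; infer_instance
  set ω : ℕ := maxCW G k with hω
  -- every clique of the induced graph has card ≤ ω
  have hcl : ∀ s : Finset ↥W, (G.induce W).IsClique (s : Set ↥W) → s.card ≤ ω := by
    intro s hs
    have hQc : G.IsClique ((s.image Subtype.val : Finset V) : Set V) := by
      intro a ha b hb hab
      simp only [Finset.coe_image, Set.mem_image, Finset.mem_coe] at ha hb
      obtain ⟨a', ha', rfl⟩ := ha
      obtain ⟨b', hb', rfl⟩ := hb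
      have : (G.induce W).Adj a' b' := hs ha' hb' (fun h => hab (by rw [h]))
      exact this
    have h1 := clique_wt_le G hQc k
    have h2 : ∑ v ∈ s.image Subtype.val, k v = (s.image Subtype.val).card := by
      rw [Finset.card_eq_sum_ones]
      refine Finset.sum_congr rfl fun v hv => ?_
      simp only [Finset.mem_image] at hv
      obtain ⟨a, _, rfl⟩ := hv
      exact a.2
    have h3 : (s.image Subtype.val).card = s.card :=
      Finset.card_image_of_injective _ Subtype.val_injective
    omega
  -- the induced graph is ω-colorable
  have hcol : (G.induce W).Colorable ω := by
    rw [← SimpleGraph.chromaticNumber_le_iff_colorable, hG W, Nat.cast_le]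
    obtain ⟨s, hs⟩ := (G.induce W).exists_isNClique_cliqueNum
    rw [← hs.card_eq]
    exact hcl s hs.isClique
  obtain ⟨c⟩ := hcol
  set f : V → Option (Fin ω) := fun v => if h : v ∈ W then some (c ⟨v, h⟩) else none with hf
  refine ⟨ω, fun i => univ.filter (fun v => f v = some i), le_refl _, ?_, ?_, ?_⟩
  · intro i a ha b hb hab hadj
    simp only [Finset.coe_filter, Set.mem_setOf_eq, hf] at ha hb
    split_ifs at ha hb with h1 h2
    · simp only [Option.some_inj] at ha hb
      have : (G.induce W).Adj ⟨a, h1⟩ ⟨b, h2⟩ := hadj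
      exact c.valid this (ha.2.trans hb.2.symm)
    · exact hb.2.elim
    · exact ha.2.elim
    · exact ha.2.elim
  · intro i v hv
    simp only [Finset.mem_filter, hf] at hv
    split_ifs at hv with h1
    · simp only [hW, Set.mem_setOf_eq] at h1; omega
    · exact hv.2.elim
  · intro v
    rcases Nat.lt_or_ge (k v) 1 with h | h
    · omega
    have hv1 : k v = 1 := le_antisymm (hk v) h
    have hvW : v ∈ W := hv1
    have hmem : v ∈ univ.filter (fun u => f u = some (c ⟨v, hvW⟩)) := by
      simp only [Finset.mem_filter, hf, dif_pos hvW, mem_univ, true_and]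
    calc k v = 1 := hv1
      _ ≤ _ := by
        refine Finset.single_le_sum (f := fun i => if v ∈ univ.filter (fun u => f u = some i) then 1 else 0) (fun i _ => Nat.zero_le _) (Finset.mem_univ (c ⟨v, hvW⟩)) |>.trans_eq' ?_
        rw [if_pos hmem]
/-- Weighted coloring lemma (Lovász replication argument): a perfect graph has a family of
at most `maxCW k` independent sets covering each vertex `v` at least `k v` times. -/
lemma weighted_lemma (hG : IsPerfect G) :
    ∀ (N : ℕ) (k : V → ℕ), (∑ v, k v) ≤ N →
    ∃ (n : ℕ) (C : Fin n → Finset V), n ≤ maxCW G k ∧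
      (∀ i, IndepSet G ((C i : Finset V) : Set V)) ∧
      (∀ i v, v ∈ C i → k v ≠ 0) ∧
      (∀ v, k v ≤ ∑ i, if v ∈ C i then 1 else 0) := by
  intro N
  induction N with
  | zero =>
    intro k hk
    exact weighted_base G hG k (fun v => by
      have := Finset.single_le_sum (f := k) (fun v _ => Nat.zero_le _) (Finset.mem_univ v)
      omega)
  | succ N ih =>
    intro k hk
    by_cases hsmall : ∀ v, k v ≤ 1
    · exact weighted_base G hG k hsmall
    push_neg at hsmall
    obtain ⟨x, hx⟩ := hsmall
    set ω : ℕ := maxCW G k with hωdef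
    have hω2 : 2 ≤ ω := by
      have : ∑ v ∈ {x}, k v ≤ ω := clique_wt_le G (by simp) k
      simp only [Finset.sum_singleton] at this
      omega
    set k' : V → ℕ := fun v => if v = x then k x - 1 else k v with hk'def
    have hk'le : ∀ v, k' v ≤ k v := fun v => by
      simp only [hk'def]
      split_ifs with h
      · subst h; omega
      · exact le_refl _
    have hk'x : k' x = k x - 1 := by simp [hk'def]
    have hk'other : ∀ v, v ≠ x → k' v = k v := fun v hv => by simp [hk'def, hv]
    have hsum' : ∑ v, k' v + 1 = ∑ v, k v := by
      rw [← Finset.sum_erase_add _ k' (Finset.mem_univ x),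
          ← Finset.sum_erase_add _ k (Finset.mem_univ x)]
      have : ∑ v ∈ Finset.univ.erase x, k' v = ∑ v ∈ Finset.univ.erase x, k v :=
        Finset.sum_congr rfl fun v hv => hk'other v (Finset.mem_erase.1 hv).1
      omega
    have hsumN : ∑ v, k' v ≤ N := by omega
    have hω' : maxCW G k' ≤ ω := maxCW_mono G hk'le
    -- sum over a clique of k equals sum of k' plus indicator of x
    have hQsum : ∀ Q : Finset V, x ∈ Q → ∑ v ∈ Q, k v = ∑ v ∈ Q, k' v + 1 := by
      intro Q hxQ
      rw [← Finset.sum_erase_add _ k hxQ, ← Finset.sum_erase_add _ k' hxQ]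
      have : ∑ v ∈ Q.erase x, k' v = ∑ v ∈ Q.erase x, k v :=
        Finset.sum_congr rfl fun v hv => hk'other v (Finset.mem_erase.1 hv).1
      omega
    by_cases hcase : maxCW G k' = ω
    · -- hard case: some maximum-weight clique avoids x
      obtain ⟨n', C', hn', hind', hsupp', hcov'⟩ := ih k' hsumN
      -- x lies in some C' i since k' x ≥ 1
      have hx' : 1 ≤ ∑ i, if x ∈ C' i then 1 else 0 := le_trans (by omega : 1 ≤ k' x) (hcov' x)
      have hex : ∃ i0, x ∈ C' i0 := by
        by_contra hc
        push_neg at hc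
        rw [Finset.sum_eq_zero (fun i _ => if_neg (hc i))] at hx'
        omega
      obtain ⟨i0, hi0⟩ := hex
      set A : Finset V := C' i0 with hA
      -- every k'-maximum clique meets every C' i and avoids x
      have hmeets : ∀ Q : Finset V, G.IsClique (Q : Set V) → ∑ v ∈ Q, k' v = ω →
          (∀ i, (Q ∩ C' i).Nonempty) ∧ x ∉ Q := by
        intro Q hQ hQω
        have hxQ : x ∉ Q := by
          intro hxQ
          have h1 := clique_wt_le G hQ k
          rw [hQsum Q hxQ, hQω] at h1
          omega
        have hcard1 : ∀ i, (Q ∩ C' i).card ≤ 1 := fun i => indep_inter_clique G (hind' i) hQ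
        have hsum1 : ∑ v ∈ Q, k' v ≤ ∑ i, (Q ∩ C' i).card := by
          calc ∑ v ∈ Q, k' v ≤ ∑ v ∈ Q, ∑ i, if v ∈ C' i then 1 else 0 :=
                Finset.sum_le_sum (fun v _ => hcov' v)
            _ = ∑ i, ∑ v ∈ Q, if v ∈ C' i then 1 else 0 := Finset.sum_comm
            _ = ∑ i, (Q ∩ C' i).card := by
                refine Finset.sum_congr rfl fun i _ => ?_
                rw [← Finset.filter_mem_eq_inter, Finset.card_filter]
        refine ⟨fun i => ?_, hxQ⟩
        by_contra hc
        rw [Finset.not_nonempty_iff_eq_empty] at hc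
        have : ∑ i, (Q ∩ C' i).card ≤ n' - 1 := by
          have h0 : (Q ∩ C' i).card = 0 := by rw [hc]; rfl
          calc ∑ j, (Q ∩ C' j).card
              = ∑ j ∈ Finset.univ.erase i, (Q ∩ C' j).card + (Q ∩ C' i).card :=
                (Finset.sum_erase_add _ _ (Finset.mem_univ i)).symm
            _ ≤ (Finset.univ.erase i).card * 1 + 0 := by
                rw [h0]
                exact Nat.add_le_add (Finset.sum_le_card_nsmul _ _ 1
                  (fun j _ => hcard1 j)) (le_refl 0)
            _ ≤ n' - 1 := by
                rw [Finset.card_erase_of_mem (Finset.mem_univ i), Finset.card_univ,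
                  Fintype.card_fin]
                omega
        omega
      -- reduce the weight along A \ {x}
      have hAsupp : ∀ v ∈ A, k' v ≠ 0 := fun v hv => hsupp' i0 v hv
      set k₂ : V → ℕ := fun v => if v ∈ A ∧ v ≠ x then k' v - 1 else k' v with hk₂def
      have hk₂le : ∀ v, k₂ v ≤ k' v := fun v => by
        simp only [hk₂def]
        split_ifs
        · omega
        · exact le_refl _
      have hsum₂ : ∑ v, k₂ v ≤ N :=
        le_trans (Finset.sum_le_sum fun v _ => hk₂le v) hsumN
      have hmax₂ : maxCW G k₂ ≤ ω - 1 := by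
        apply Finset.sup_le
        intro Q hQ
        simp only [Finset.mem_filter] at hQ
        by_cases hQω : ∑ v ∈ Q, k' v = ω
        · obtain ⟨hmeet, hxQ⟩ := hmeets Q hQ.2 hQω
          obtain ⟨v0, hv0⟩ := hmeet i0
          simp only [Finset.mem_inter] at hv0
          have hv0x : v0 ≠ x := fun h => hxQ (h ▸ hv0.1)
          have hv0k : k' v0 ≠ 0 := hAsupp v0 hv0.2
          have hv0k₂ : k₂ v0 = k' v0 - 1 := by
            simp only [hk₂def]; exact if_pos (And.intro hv0.2 hv0x)
          have : ∑ v ∈ Q, k₂ v ≤ ∑ v ∈ Q, k' v - 1 := by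
            rw [← Finset.sum_erase_add _ k₂ hv0.1, ← Finset.sum_erase_add _ k' hv0.1]
            have := Finset.sum_le_sum (f := k₂) (g := k')
              (fun v (_ : v ∈ Q.erase v0) => hk₂le v)
            omega
          omega
        · have h1 : ∑ v ∈ Q, k' v ≤ ω := hcase ▸ clique_wt_le G hQ.2 k'
          have h2 : ∑ v ∈ Q, k₂ v ≤ ∑ v ∈ Q, k' v :=
            Finset.sum_le_sum fun v _ => hk₂le v
          omega
      obtain ⟨n₂, C₂, hn₂, hind₂, hsupp₂, hcov₂⟩ := ih k₂ hsum₂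
      refine ⟨n₂ + 1, Fin.snoc C₂ A, by omega, ?_, ?_, ?_⟩
      · intro i
        refine Fin.lastCases ?_ ?_ i
        · simpa using hind' i0
        · intro j; simpa using hind₂ j
      · intro i v
        refine Fin.lastCases ?_ ?_ i
        · simp only [Fin.snoc_last]
          intro hv
          have := hsupp' i0 v hv
          have := hk'le v
          omega
        · intro j
          simp only [Fin.snoc_castSucc]
          intro hv
          have := hsupp₂ j v hv
          have := hk₂le v
          have := hk'le v
          omega
      · intro v
        rw [Fin.sum_univ_castSucc]
        simp only [Fin.snoc_castSucc, Fin.snoc_last]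
        have h1 := hcov₂ v
        by_cases hvA : v ∈ A
        · rw [if_pos hvA]
          by_cases hvx : v = x
          · subst hvx
            have : k₂ v = k' v := by simp [hk₂def]
            omega
          · have hk2v : k₂ v = k' v - 1 := by simp [hk₂def, hvA, hvx]
            have := hAsupp v hvA
            have hkv : k' v = k v := hk'other v hvx
            omega
        · rw [if_neg hvA]
          have hvx : v ≠ x := fun h => hvA (h ▸ hi0)
          have : k₂ v = k' v := by simp [hk₂def, hvA]
          have := hk'other v hvx
          omega
    · -- easy case: add the singleton {x}
      have hlt : maxCW G k' ≤ ω - 1 := by omega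
      obtain ⟨n', C', hn', hind', hsupp', hcov'⟩ := ih k' hsumN
      refine ⟨n' + 1, Fin.snoc C' {x}, by omega, ?_, ?_, ?_⟩
      · intro i
        refine Fin.lastCases ?_ ?_ i
        · simp only [Fin.snoc_last, Finset.coe_singleton]
          exact Set.pairwise_singleton x _
        · intro j; simpa using hind' j
      · intro i v
        refine Fin.lastCases ?_ ?_ i
        · simp only [Fin.snoc_last, Finset.mem_singleton]
          rintro rfl; omega
        · intro j
          simp only [Fin.snoc_castSucc]
          intro hv
          have := hsupp' j v hv
          have := hk'le v
          omega
      · intro v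
        rw [Fin.sum_univ_castSucc]
        simp only [Fin.snoc_castSucc, Fin.snoc_last, Finset.mem_singleton]
        have h1 := hcov' v
        by_cases hvx : v = x
        · subst hvx; rw [if_pos rfl]; omega
        · rw [if_neg hvx]
          have := hk'other v hvx
          omega

open Classical in
/-- In a perfect graph there is a clique meeting every maximum independent subset of `W`. -/
lemma key_lemma (hG : IsPerfect G) (W : Finset V) (α : ℕ) (hα : 1 ≤ α)
    (hmax : ∀ S : Finset V, S ⊆ W → IndepSet G (S : Set V) → S.card ≤ α) :
    ∃ Q : Finset V, Q ⊆ W ∧ G.IsClique (Q : Set V) ∧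
      ∀ S : Finset V, S ⊆ W → IndepSet G (S : Set V) → S.card = α → (S ∩ Q).Nonempty := by
  by_contra hcon
  push_neg at hcon
  set 𝒬 : Finset (Finset V) :=
    W.powerset.filter (fun Q : Finset V => G.IsClique (Q : Set V)) with h𝒬
  have hmem𝒬 : ∀ Q : Finset V, Q ∈ 𝒬 ↔ Q ⊆ W ∧ G.IsClique (Q : Set V) := by
    intro Q; simp [h𝒬]
  have hchoice : ∀ Q : Finset V, ∃ S : Finset V, Q ∈ 𝒬 →
      S ⊆ W ∧ IndepSet G (S : Set V) ∧ S.card = α ∧ S ∩ Q = ∅ := by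
    intro Q
    by_cases hQ : Q ∈ 𝒬
    · obtain ⟨hQW, hQc⟩ := (hmem𝒬 Q).1 hQ
      obtain ⟨S, hSW, hSi, hScard, hSQ⟩ := hcon Q hQW hQc
      exact ⟨S, fun _ => ⟨hSW, hSi, hScard, hSQ⟩⟩
    · exact ⟨∅, fun h => absurd h hQ⟩
  choose A hA using hchoice
  set k : V → ℕ := fun v => ∑ Q ∈ 𝒬, if v ∈ A Q then 1 else 0 with hk
  have hq1 : (∅ : Finset V) ∈ 𝒬 := (hmem𝒬 ∅).2 ⟨Finset.empty_subset _, by simp⟩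
  have hqpos : 1 ≤ 𝒬.card := Finset.card_pos.2 ⟨∅, hq1⟩
  have hsupp : ∀ v, k v ≠ 0 → v ∈ W := by
    intro v hv
    simp only [hk] at hv
    by_contra hvW
    refine hv (Finset.sum_eq_zero fun Q hQ => if_neg fun hvA => hvW ?_)
    exact (hA Q hQ).1 hvA
  have hcardA : ∀ Q ∈ 𝒬, (∑ v, if v ∈ A Q then 1 else 0) = α := by
    intro Q hQ
    rw [Finset.sum_boole]
    simp only [Finset.filter_mem_eq_inter, Finset.univ_inter]
    exact_mod_cast (hA Q hQ).2.2.1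
  have hktotal : ∑ v, k v = α * 𝒬.card := by
    simp only [hk]
    rw [Finset.sum_comm]
    rw [Finset.sum_congr rfl hcardA]
    rw [Finset.sum_const, smul_eq_mul, mul_comm]
  -- maxCW k ≤ |𝒬| - 1
  have hmaxk : maxCW G k ≤ 𝒬.card - 1 := by
    apply Finset.sup_le
    intro Q hQ
    simp only [Finset.mem_filter] at hQ
    set Q'' : Finset V := Q ∩ W with hQ''
    have hQ''c : G.IsClique (Q'' : Set V) := hQ.2.subset (by simp [hQ''])
    have hQ''𝒬 : Q'' ∈ 𝒬 := (hmem𝒬 Q'').2 ⟨Finset.inter_subset_right, hQ''c⟩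
    have hsum1 : ∑ v ∈ Q, k v = ∑ v ∈ Q'', k v := by
      refine (Finset.sum_subset Finset.inter_subset_left ?_).symm
      intro v hv hv'
      by_contra h0
      exact hv' (Finset.mem_inter.2 ⟨hv, hsupp v h0⟩)
    have hsum2 : ∑ v ∈ Q'', k v = ∑ P ∈ 𝒬, (Q'' ∩ A P).card := by
      simp only [hk]
      rw [Finset.sum_comm]
      refine Finset.sum_congr rfl fun P _ => ?_
      rw [← Finset.filter_mem_eq_inter, Finset.card_filter]
    have hterm : ∀ P ∈ 𝒬, (Q'' ∩ A P).card ≤ 1 :=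
      fun P hP => indep_inter_clique G (hA P hP).2.1 hQ''c
    have hzero : (Q'' ∩ A Q'').card = 0 := by
      rw [Finset.inter_comm, (hA Q'' hQ''𝒬).2.2.2]
      rfl
    have : ∑ P ∈ 𝒬, (Q'' ∩ A P).card ≤ 𝒬.card - 1 := by
      calc ∑ P ∈ 𝒬, (Q'' ∩ A P).card
          = ∑ P ∈ 𝒬.erase Q'', (Q'' ∩ A P).card + (Q'' ∩ A Q'').card :=
            (Finset.sum_erase_add _ _ hQ''𝒬).symm
        _ ≤ (𝒬.erase Q'').card * 1 + 0 := by
            rw [hzero]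
            exact Nat.add_le_add (Finset.sum_le_card_nsmul _ _ 1
              (fun P hP => hterm P (Finset.mem_of_mem_erase hP))) (le_refl 0)
        _ ≤ 𝒬.card - 1 := by
            rw [Finset.card_erase_of_mem hQ''𝒬]
            omega
    omega
  obtain ⟨n, C, hn, hind, hsuppC, hcov⟩ :=
    weighted_lemma G hG (∑ v, k v) k (le_refl _)
  have hCW : ∀ i, C i ⊆ W := fun i v hv => hsupp v (hsuppC i v hv)
  have hCcard : ∀ i, (C i).card ≤ α := fun i => hmax (C i) (hCW i) (hind i)
  have hcount : ∑ v, k v ≤ n * α := by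
    calc ∑ v, k v ≤ ∑ v, ∑ i, if v ∈ C i then 1 else 0 :=
          Finset.sum_le_sum fun v _ => hcov v
      _ = ∑ i, ∑ v, if v ∈ C i then 1 else 0 := Finset.sum_comm
      _ = ∑ i, (C i).card := by
          refine Finset.sum_congr rfl fun i _ => ?_
          rw [Finset.sum_boole]
          simp [Finset.filter_mem_eq_inter]
      _ ≤ ∑ _i : Fin n, α := Finset.sum_le_sum fun i _ => hCcard i
      _ = n * α := by rw [Finset.sum_const, smul_eq_mul, Finset.card_univ, Fintype.card_fin]
  have h3 : α * 𝒬.card ≤ α * (𝒬.card - 1) := by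
    calc α * 𝒬.card = ∑ v, k v := hktotal.symm
      _ ≤ n * α := hcount
      _ ≤ (𝒬.card - 1) * α := Nat.mul_le_mul_right α (hn.trans hmaxk)
      _ = α * (𝒬.card - 1) := mul_comm _ _
  have h4 : 𝒬.card ≤ 𝒬.card - 1 := Nat.le_of_mul_le_mul_left h3 (by omega)
  omega

open Classical in
lemma cover_lemma (hG : IsPerfect G) :
    ∀ (l : ℕ) (W : Finset V),
      (∀ S : Finset V, S ⊆ W → IndepSet G (S : Set V) → S.card ≤ l) →
      ∃ K : Fin l → Finset V, (∀ i, K i ⊆ W) ∧ (∀ v ∈ W, ∃ i, v ∈ K i) ∧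
        (∀ i j, i ≠ j → Disjoint (K i) (K j)) ∧ (∀ i, G.IsClique ((K i : Finset V) : Set V)) := by
  intro l
  induction l with
  | zero =>
    intro W hW
    refine ⟨Fin.elim0, fun i => i.elim0, fun v hv => ?_, fun i => i.elim0, fun i => i.elim0⟩
    have := hW {v} (Finset.singleton_subset_iff.2 hv) (by simp [IndepSet])
    simp at this
  | succ l ih =>
    intro W hW
    by_cases hWe : W = ∅
    · subst hWe
      exact ⟨fun _ => ∅, fun i => Finset.empty_subset _, fun v hv => absurd hv (by simp),
        fun i j _ => Finset.disjoint_empty_left _, fun i => by simp⟩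
    obtain ⟨v0, hv0⟩ := Finset.nonempty_iff_ne_empty.2 hWe
    set 𝒮 : Finset (Finset V) :=
      W.powerset.filter (fun S : Finset V => IndepSet G (S : Set V)) with h𝒮
    set α : ℕ := 𝒮.sup Finset.card with hα
    have hmemS : ∀ S : Finset V, S ∈ 𝒮 ↔ S ⊆ W ∧ IndepSet G (S : Set V) := by
      intro S; simp [h𝒮]
    have hmax : ∀ S : Finset V, S ⊆ W → IndepSet G (S : Set V) → S.card ≤ α :=
      fun S h1 h2 => Finset.le_sup ((hmemS S).2 ⟨h1, h2⟩)
    have hα1 : 1 ≤ α := by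
      have : ({v0} : Finset V).card ≤ α :=
        hmax {v0} (Finset.singleton_subset_iff.2 hv0) (by simp [IndepSet])
      simpa using this
    have hαl : α ≤ l + 1 := by
      rw [hα]
      apply Finset.sup_le
      intro S hS
      obtain ⟨h1, h2⟩ := (hmemS S).1 hS
      exact hW S h1 h2
    obtain ⟨Q, hQW, hQc, hQmeet⟩ := key_lemma G hG W α hα1 hmax
    have hW' : ∀ S : Finset V, S ⊆ W \ Q → IndepSet G (S : Set V) → S.card ≤ l := by
      intro S hSW hSi
      have hSW2 : S ⊆ W := hSW.trans (Finset.sdiff_subset)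
      have h1 : S.card ≤ α := hmax S hSW2 hSi
      by_contra hc
      have hcard : S.card = α := by omega
      obtain ⟨a, ha⟩ := hQmeet S hSW2 hSi hcard
      simp only [Finset.mem_inter] at ha
      have := hSW ha.1
      simp only [Finset.mem_sdiff] at this
      exact this.2 ha.2
    obtain ⟨K', hK'W, hK'cov, hK'disj, hK'c⟩ := ih (W \ Q) hW'
    refine ⟨Fin.snoc K' Q, ?_, ?_, ?_, ?_⟩
    · intro i
      refine Fin.lastCases ?_ ?_ i
      · simpa using hQW
      · intro j
        simp only [Fin.snoc_castSucc]
        exact (hK'W j).trans Finset.sdiff_subset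
    · intro v hv
      by_cases hvQ : v ∈ Q
      · exact ⟨Fin.last l, by simpa using hvQ⟩
      · obtain ⟨i, hi⟩ := hK'cov v (Finset.mem_sdiff.2 ⟨hv, hvQ⟩)
        exact ⟨i.castSucc, by simpa using hi⟩
    · have hdQ : ∀ j, Disjoint Q (K' j) := by
        intro j
        rw [Finset.disjoint_left]
        intro a haQ haK
        have := hK'W j haK
        simp only [Finset.mem_sdiff] at this
        exact this.2 haQ
      intro i j hij
      rcases Fin.eq_castSucc_or_eq_last i with ⟨i', rfl⟩ | rfl <;>
        rcases Fin.eq_castSucc_or_eq_last j with ⟨j', rfl⟩ | rfl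
      · simp only [Fin.snoc_castSucc]
        exact hK'disj i' j' fun h => hij (by rw [h])
      · simp only [Fin.snoc_last, Fin.snoc_castSucc]
        exact (hdQ i').symm
      · simp only [Fin.snoc_last, Fin.snoc_castSucc]
        exact hdQ j'
      · exact absurd rfl hij
    · intro i
      refine Fin.lastCases ?_ ?_ i
      · simpa using hQc
      · intro j
        simp only [Fin.snoc_castSucc]
        exact hK'c j

end Aux

/-- a perfect graph either has a partition of its vertex set into at most `l`
cliques, or contains an independent set of size `l + 1`. -/
theorem perfect_cliquePartition_or_indepSet {V : Type*} [Fintype V] (G : SimpleGraph V)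
    (hG : IsPerfect G) (l : ℕ) :
    PartitionIntoCliques l G Set.univ ∨
      ∃ s : Finset V, IndepSet G (↑s : Set V) ∧ s.card = l + 1 := by
  classical
  by_cases hind : ∀ S : Finset V, IndepSet G (S : Set V) → S.card ≤ l
  · left
    obtain ⟨K, hKW, hKcov, hKdisj, hKc⟩ := cover_lemma G hG l Finset.univ
      (fun S _ h => hind S h)
    refine ⟨fun i => (K i : Set V), ?_, ?_, fun i => hKc i⟩
    · ext v
      simp only [Set.mem_iUnion, Set.mem_univ, iff_true, Finset.mem_coe]
      exact hKcov v (Finset.mem_univ v)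
    · intro i j hij
      exact Finset.disjoint_coe.2 (hKdisj i j hij)
  · right
    push_neg at hind
    obtain ⟨S, hSi, hSc⟩ := hind
    obtain ⟨t, htS, htc⟩ := Finset.exists_subset_card_eq (s := S) (n := l+1) (by omega)
    have htS' : (t : Set V) ⊆ (S : Set V) := Finset.coe_subset.2 htS
    exact ⟨t, fun a ha b hb hab => hSi (htS' ha) (htS' hb) hab, htc⟩
end

section
/- (Weak Perfect Graph Theorem, Lovász) A finite simple graph G is perfect if and only if its complement is perfect. -/
variable {V : Type*}

set_option linter.unusedSectionVars false

namespace WPGT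

open Finset

variable {V : Type*} [Fintype V] [DecidableEq V]

/-- Maximum size of a clique of `G` contained in `s`. -/
noncomputable def omegaOn (G : SimpleGraph V) (s : Finset V) : ℕ :=
  sSup {n | ∃ t : Finset V, t ⊆ s ∧ G.IsClique (t : Set V) ∧ t.card = n}

/-- `s` can be properly colored with colors `< n`. -/
def ColOn (G : SimpleGraph V) (s : Finset V) (n : ℕ) : Prop :=
  ∃ c : V → ℕ, (∀ v ∈ s, c v < n) ∧ ∀ u ∈ s, ∀ v ∈ s, G.Adj u v → c u ≠ c v

variable {G : SimpleGraph V} {s t : Finset V}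

lemma omegaOn_bddAbove (G : SimpleGraph V) (s : Finset V) :
    BddAbove {n | ∃ t : Finset V, t ⊆ s ∧ G.IsClique (t : Set V) ∧ t.card = n} := by
  refine ⟨Fintype.card V, fun n hn => ?_⟩
  obtain ⟨t, -, -, rfl⟩ := hn
  exact t.card_le_univ

lemma card_le_omegaOn (hts : t ⊆ s) (ht : G.IsClique (t : Set V)) : t.card ≤ omegaOn G s :=
  le_csSup (omegaOn_bddAbove G s) ⟨t, hts, ht, rfl⟩

lemma exists_clique_omegaOn (G : SimpleGraph V) (s : Finset V) :
    ∃ t : Finset V, t ⊆ s ∧ G.IsClique (t : Set V) ∧ t.card = omegaOn G s :=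
  Nat.sSup_mem ⟨0, show ∃ t : Finset V, t ⊆ s ∧ G.IsClique (t : Set V) ∧ t.card = 0 from ⟨∅, by simp, by simp, by simp⟩⟩ (omegaOn_bddAbove G s)

lemma omegaOn_mono (hst : s ⊆ t) : omegaOn G s ≤ omegaOn G t := by
  obtain ⟨u, hu, hc, hcard⟩ := exists_clique_omegaOn G s
  exact hcard ▸ card_le_omegaOn (hu.trans hst) hc

lemma exists_clique_card_eq {m : ℕ} (hm : m ≤ omegaOn G s) :
    ∃ t : Finset V, t ⊆ s ∧ G.IsClique (t : Set V) ∧ t.card = m := by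
  obtain ⟨u, hu, hc, hcard⟩ := exists_clique_omegaOn G s
  obtain ⟨t, htu, htcard⟩ := Finset.exists_subset_card_eq (hcard ▸ hm)
  exact ⟨t, htu.trans hu, hc.subset (by exact_mod_cast htu), htcard⟩

lemma ColOn.mono_nat {n m : ℕ} (h : ColOn G s n) (hnm : n ≤ m) : ColOn G s m := by
  obtain ⟨c, hlt, hc⟩ := h
  exact ⟨c, fun v hv => lt_of_lt_of_le (hlt v hv) hnm, hc⟩

lemma ColOn.mono_subset {n : ℕ} (h : ColOn G t n) (hst : s ⊆ t) : ColOn G s n := by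
  obtain ⟨c, hlt, hc⟩ := h
  exact ⟨c, fun v hv => hlt v (hst hv), fun u hu v hv => hc u (hst hu) v (hst hv)⟩

lemma colOn_empty (G : SimpleGraph V) (n : ℕ) : ColOn G ∅ n :=
  ⟨fun _ => 0, by simp, by simp⟩

/-- independent sets are cliques of the complement; intersection with a clique has card ≤ 1 -/
lemma card_inter_le_one {C A : Finset V} (hC : G.IsClique (C : Set V))
    (hA : Gᶜ.IsClique (A : Set V)) : (C ∩ A).card ≤ 1 := by
  refine Finset.card_le_one.mpr fun u hu v hv => ?_
  simp only [Finset.mem_inter] at hu hv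
  by_contra hne
  exact (hA hu.2 hv.2 hne).2 (hC hu.1 hv.1 hne)



lemma colorable_induce_iff (G : SimpleGraph V) (s : Finset V) (n : ℕ) :
    (G.induce (s : Set V)).Colorable n ↔ ColOn G s n := by
  constructor
  · rintro ⟨C⟩
    refine ⟨fun v => if h : v ∈ s then (C ⟨v, by simpa using h⟩ : ℕ) else 0, ?_, ?_⟩
    · intro v hv
      simpa [hv] using (C ⟨v, by simpa using hv⟩).isLt
    · intro u hu v hv hadj
      simp only [hu, hv, dif_pos]
      have hadj' : (G.induce (s : Set V)).Adj ⟨u, by simpa using hu⟩ ⟨v, by simpa using hv⟩ := by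
        simpa using hadj
      have hvalid := C.valid hadj'
      exact fun h => hvalid (Fin.ext h)
  · rintro ⟨c, hlt, hc⟩
    exact ⟨SimpleGraph.Coloring.mk
      (fun v => ⟨c v, hlt v (by simpa using v.2)⟩)
      (fun {a b} hab h => hc a (by simpa using a.2) b (by simpa using b.2)
        (by simpa using hab) (by simpa using h))⟩

lemma cliqueNum_induce (G : SimpleGraph V) (s : Finset V) :
    (G.induce (s : Set V)).cliqueNum = omegaOn G s := by
  apply le_antisymm
  · obtain ⟨t, ht⟩ := SimpleGraph.exists_isNClique_cliqueNum (G := G.induce (s : Set V))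
    have himg : G.IsClique ((t.image Subtype.val : Finset V) : Set V) := by
      intro u hu v hv huv
      simp only [coe_image, Set.mem_image, mem_coe] at hu hv
      obtain ⟨x, hx, rfl⟩ := hu
      obtain ⟨y, hy, rfl⟩ := hv
      have hxy : x ≠ y := fun h => huv (by rw [h])
      simpa using ht.isClique hx hy hxy
    have hsub : t.image Subtype.val ⊆ s := by
      intro u hu
      simp only [mem_image] at hu
      obtain ⟨x, -, rfl⟩ := hu
      simpa using x.2
    have hcard : (t.image Subtype.val).card = t.card :=
      Finset.card_image_of_injective _ Subtype.val_injective
    calc (G.induce (s : Set V)).cliqueNum = t.card := ht.card_eq.symm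
      _ = (t.image Subtype.val).card := hcard.symm
      _ ≤ omegaOn G s := card_le_omegaOn hsub himg
  · obtain ⟨t, hts, hc, hcard⟩ := exists_clique_omegaOn G s
    let t' : Finset ↥(s : Set V) :=
      t.attach.map ⟨fun x => ⟨x.1, by simpa using hts x.2⟩,
        fun x y h => by have h' := congrArg Subtype.val h; exact Subtype.ext h'⟩
    have hclique : (G.induce (s : Set V)).IsClique (t' : Set ↥(s : Set V)) := by
      intro u hu v hv huv
      simp only [t', coe_map, Set.mem_image, mem_coe, Function.Embedding.coeFn_mk,
        mem_attach, true_and, Set.mem_setOf_eq] at hu hv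
      obtain ⟨x, rfl⟩ := hu
      obtain ⟨y, rfl⟩ := hv
      have hxy : (x : V) ≠ (y : V) := fun h => huv (by rw [Subtype.ext h])
      exact hc x.2 y.2 hxy
    have hcard' : t'.card = t.card := by simp [t']
    calc omegaOn G s = t.card := hcard.symm
      _ = t'.card := hcard'.symm
      _ ≤ (G.induce (s : Set V)).cliqueNum := SimpleGraph.IsClique.card_le_cliqueNum (tc := hclique)

lemma isPerfect_iff_colOn (G : SimpleGraph V) :
    IsPerfect G ↔ ∀ s : Finset V, ColOn G s (omegaOn G s) := by
  constructor
  · intro h s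
    rw [← colorable_induce_iff, ← SimpleGraph.chromaticNumber_le_iff_colorable, h (↑s : Set V),
      cliqueNum_induce, Nat.cast_le]
  · intro h W
    have hW : W = ((W.toFinite.toFinset : Finset V) : Set V) := by
      simp [Set.Finite.coe_toFinset]
    rw [hW]
    apply le_antisymm
    · rw [cliqueNum_induce, SimpleGraph.chromaticNumber_le_iff_colorable, colorable_induce_iff]
      exact h _
    · obtain ⟨t, ht⟩ := SimpleGraph.exists_isNClique_cliqueNum
        (G := G.induce ((W.toFinite.toFinset : Finset V) : Set V))
      calc ((G.induce ((W.toFinite.toFinset : Finset V) : Set V)).cliqueNum : ℕ∞)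
          = (t.card : ℕ∞) := by rw [ht.card_eq]
        _ ≤ _ := ht.isClique.card_le_chromaticNumber

lemma card_le_of_colOn {n : ℕ} (h : ColOn G s n) : s.card ≤ n * omegaOn Gᶜ s := by
  obtain ⟨c, hlt, hc⟩ := h
  have hcard : s.card = ∑ j ∈ Finset.range n, (s.filter (fun v => c v = j)).card :=
    Finset.card_eq_sum_card_fiberwise (fun v hv => Finset.mem_range.mpr (hlt v hv))
  have hfib : ∀ j, (s.filter (fun v => c v = j)).card ≤ omegaOn Gᶜ s := by
    intro j
    refine card_le_omegaOn (filter_subset _ _) ?_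
    intro u hu v hv huv
    simp only [coe_filter, Set.mem_setOf_eq] at hu hv
    exact ⟨huv, fun hadj => hc u hu.1 v hv.1 hadj (hu.2.trans hv.2.symm)⟩
  calc s.card = ∑ j ∈ Finset.range n, (s.filter (fun v => c v = j)).card := hcard
    _ ≤ ∑ _j ∈ Finset.range n, omegaOn Gᶜ s := Finset.sum_le_sum fun j _ => hfib j
    _ = n * omegaOn Gᶜ s := by simp [Finset.sum_const, mul_comm]

/-- The easy direction: a perfect-type coloring bound gives `|s| ≤ ω(s)·α(s)`. -/
lemma card_le_mul_of_colOn (h : ∀ s : Finset V, ColOn G s (omegaOn G s)) (s : Finset V) :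
    s.card ≤ omegaOn G s * omegaOn Gᶜ s :=
  card_le_of_colOn (h s)

lemma forced_ones {m : ℕ} {f : ℕ → ℕ} (hle : ∀ j ∈ Finset.range m, f j ≤ 1)
    (hsum : m ≤ ∑ j ∈ Finset.range m, f j) : ∀ j ∈ Finset.range m, f j = 1 := by
  intro j hj
  by_contra h
  have hj0 : f j = 0 := by have := hle j hj; omega
  have hsplit : f j + ∑ jj ∈ (Finset.range m).erase j, f jj = ∑ jj ∈ Finset.range m, f jj :=
    Finset.add_sum_erase _ f hj
  have h2 : ∑ jj ∈ (Finset.range m).erase j, f jj ≤ ((Finset.range m).erase j).card • 1 :=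
    Finset.sum_le_card_nsmul _ _ _ (fun x hx => hle x (Finset.mem_of_mem_erase hx))
  have h3 : ((Finset.range m).erase j).card = m - 1 := by
    rw [Finset.card_erase_of_mem hj, Finset.card_range]
  rw [h3, smul_eq_mul, mul_one] at h2
  have hm : 1 ≤ m := by
    rcases Nat.eq_zero_or_pos m with h0 | h0
    · subst h0; simp at hj
    · exact h0
  omega

lemma forced_ones' {m : ℕ} {f : ℕ → ℕ} (hle : ∀ j ∈ Finset.range m, f j ≤ 1)
    {j' : ℕ} (hj' : j' ∈ Finset.range m) (hz : f j' = 0)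
    (hsum : m - 1 ≤ ∑ j ∈ Finset.range m, f j) :
    ∀ j ∈ Finset.range m, j ≠ j' → f j = 1 := by
  intro j hj hne
  by_contra h
  have hj0 : f j = 0 := by have := hle j hj; omega
  have hsplit : f j + ∑ jj ∈ (Finset.range m).erase j, f jj = ∑ jj ∈ Finset.range m, f jj :=
    Finset.add_sum_erase _ f hj
  have hj'mem : j' ∈ (Finset.range m).erase j := Finset.mem_erase.mpr ⟨fun h => hne h.symm, hj'⟩
  have hsplit2 : f j' + ∑ jj ∈ ((Finset.range m).erase j).erase j', f jj
      = ∑ jj ∈ (Finset.range m).erase j, f jj := Finset.add_sum_erase _ f hj'mem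
  have h2 : ∑ jj ∈ ((Finset.range m).erase j).erase j', f jj
      ≤ (((Finset.range m).erase j).erase j').card • 1 :=
    Finset.sum_le_card_nsmul _ _ _
      (fun x hx => hle x (Finset.mem_of_mem_erase (Finset.mem_of_mem_erase hx)))
  have h3 : (((Finset.range m).erase j).erase j').card = m - 2 := by
    rw [Finset.card_erase_of_mem hj'mem, Finset.card_erase_of_mem hj, Finset.card_range]
    omega
  rw [h3, smul_eq_mul, mul_one] at h2
  have hm : 2 ≤ m := by
    have hjm := Finset.mem_range.mp hj
    have hj'm := Finset.mem_range.mp hj'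
    omega
  omega

theorem core (G : SimpleGraph V) (H : ∀ s : Finset V, s.card ≤ omegaOn G s * omegaOn Gᶜ s) :
    ∀ (n : ℕ) (s : Finset V), s.card ≤ n → ColOn G s (omegaOn G s) := by
  intro n
  induction n with
  | zero =>
    intro s hs
    rw [Nat.le_zero, Finset.card_eq_zero] at hs
    subst hs
    exact colOn_empty G _
  | succ n IH =>
    intro s hcard
    by_contra hcon
    set ω := omegaOn G s with hω_def
    set α := omegaOn Gᶜ s with hα_def
    -- s is nonempty
    have hs_ne : s.Nonempty := by
      rcases Finset.eq_empty_or_nonempty s with rfl | h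
      · exact absurd (colOn_empty G _) hcon
      · exact h
    obtain ⟨v0, hv0⟩ := hs_ne
    have hω1 : 1 ≤ ω := by
      have : ({v0} : Finset V).card ≤ ω := card_le_omegaOn (by simpa using hv0) (by simp)
      simpa using this
    have hα1 : 1 ≤ α := by
      have : ({v0} : Finset V).card ≤ α := card_le_omegaOn (by simpa using hv0) (by simp)
      simpa using this
    -- F1 : removing a vertex leaves an ω-colorable set
    have F1 : ∀ v ∈ s, ColOn G (s.erase v) ω := by
      intro v hv
      have hec : (s.erase v).card ≤ n := by
        rw [Finset.card_erase_of_mem hv]; omega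
      exact (IH _ hec).mono_nat (omegaOn_mono (Finset.erase_subset _ _))
    -- F2 : removing a nonempty independent set leaves an ω-clique
    have F2 : ∀ S : Finset V, S ⊆ s → S.Nonempty → Gᶜ.IsClique (S : Set V) →
        ∃ C : Finset V, C ⊆ s \ S ∧ G.IsClique (C : Set V) ∧ C.card = ω := by
      intro S hSs hSne hSind
      have hssub : s \ S ⊂ s := Finset.sdiff_ssubset hSs hSne
      have htcard : (s \ S).card ≤ n := by
        have := Finset.card_lt_card hssub
        omega
      have ht : ColOn G (s \ S) (omegaOn G (s \ S)) := IH _ htcard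
      have hω_t : ω ≤ omegaOn G (s \ S) := by
        by_contra hlt
        push_neg at hlt
        obtain ⟨c, hclt, hcval⟩ := ht.mono_nat (show omegaOn G (s \ S) ≤ ω - 1 by omega)
        refine hcon ⟨fun v => if v ∈ S then ω - 1 else c v, ?_, ?_⟩
        · intro v hv
          by_cases h : v ∈ S
          · simp only [h, if_pos]; omega
          · simp only [h, if_neg, not_false_iff]
            have : c v < ω - 1 := hclt v (Finset.mem_sdiff.mpr ⟨hv, h⟩)
            omega
        · intro u hu v hv hadj
          by_cases h1 : u ∈ S <;> by_cases h2 : v ∈ S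
          · exact absurd hadj (hSind h1 h2 hadj.ne).2.elim
          · simp only [h1, h2, if_pos, if_neg, not_false_iff]
            have : c v < ω - 1 := hclt v (Finset.mem_sdiff.mpr ⟨hv, h2⟩)
            omega
          · simp only [h1, h2, if_pos, if_neg, not_false_iff]
            have : c u < ω - 1 := hclt u (Finset.mem_sdiff.mpr ⟨hu, h1⟩)
            omega
          · simp only [h1, h2, if_neg, not_false_iff]
            exact hcval u (Finset.mem_sdiff.mpr ⟨hu, h1⟩) v (Finset.mem_sdiff.mpr ⟨hv, h2⟩) hadj
      exact exists_clique_card_eq hω_t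
    -- a maximum independent set
    obtain ⟨A, hAs, hAind, hAcard⟩ := exists_clique_omegaOn Gᶜ s
    -- colorings of s minus a vertex of A
    have hcol : ∀ v : {x // x ∈ A}, ∃ c : V → ℕ, (∀ x ∈ s.erase ↑v, c x < ω) ∧
        ∀ x ∈ s.erase ↑v, ∀ y ∈ s.erase ↑v, G.Adj x y → c x ≠ c y :=
      fun v => F1 ↑v (hAs v.2)
    choose cfun hclt hcval using hcol
    -- the α·ω + 1 independent sets
    set ι := Option ({x // x ∈ A} × Fin ω) with hι_def
    set SS : ι → Finset V := fun k => match k with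
      | none => A
      | some (v, j) => (s.erase ↑v).filter (fun x => cfun v x = (j : ℕ)) with hSS_def
    have hSsub : ∀ k, SS k ⊆ s := by
      rintro (_ | ⟨v, j⟩)
      · exact hAs
      · exact (Finset.filter_subset _ _).trans (Finset.erase_subset _ _)
    have hSind : ∀ k, Gᶜ.IsClique (SS k : Set V) := by
      rintro (_ | ⟨v, j⟩)
      · exact hAind
      · intro x hx y hy hxy
        simp only [SS, Finset.coe_filter, Set.mem_setOf_eq] at hx hy
        exact ⟨hxy, fun hadj => hcval v x hx.1 y hy.1 hadj (hx.2.trans hy.2.symm)⟩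
    -- choose an ω-clique avoiding each SS k
    have hCex : ∀ k, ∃ C : Finset V, C ⊆ s ∧ Disjoint C (SS k) ∧ G.IsClique (C : Set V) ∧
        C.card = ω := by
      intro k
      rcases Finset.eq_empty_or_nonempty (SS k) with hk | hk
      · obtain ⟨C, hCs, hCq, hCc⟩ := exists_clique_omegaOn G s
        exact ⟨C, hCs, by simp [hk], hCq, hCc⟩
      · obtain ⟨C, hCs, hCq, hCc⟩ := F2 (SS k) (hSsub k) hk (hSind k)
        rw [Finset.subset_sdiff] at hCs
        exact ⟨C, hCs.1, hCs.2, hCq, hCc⟩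
    choose CC hCsub hCdisj hCclique hCcard using hCex
    -- intersecting with a color class equals a fiber
    have hinter : ∀ (v : {x // x ∈ A}) (C : Finset V), C ⊆ s.erase ↑v → ∀ j : Fin ω,
        C ∩ SS (some (v, j)) = C.filter (fun x => cfun v x = (j : ℕ)) := by
      intro v C hC j
      ext x
      simp only [Finset.mem_inter, Finset.mem_filter, SS]
      constructor
      · rintro ⟨hxC, -, hcx⟩
        exact ⟨hxC, hcx⟩
      · rintro ⟨hxC, hcx⟩
        exact ⟨hxC, hC hxC, hcx⟩
    -- cliques inside s.erase v have small fibers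
    have hfible : ∀ (v : {x // x ∈ A}) (C : Finset V), G.IsClique (C : Set V) →
        C ⊆ s.erase ↑v → ∀ j : ℕ, (C.filter (fun x => cfun v x = j)).card ≤ 1 := by
      intro v C hCq hC j
      refine Finset.card_le_one.mpr fun x hx y hy => ?_
      simp only [Finset.mem_filter] at hx hy
      by_contra hne
      exact hcval v x (hC hx.1) y (hC hy.1) (hCq hx.1 hy.1 hne) (hx.2.trans hy.2.symm)
    have hfibsum : ∀ (v : {x // x ∈ A}) (C : Finset V), C ⊆ s.erase ↑v →
        C.card = ∑ j ∈ Finset.range ω, (C.filter (fun x => cfun v x = j)).card := by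
      intro v C hC
      exact Finset.card_eq_sum_card_fiberwise
        (fun x hx => Finset.mem_range.mpr (hclt v x (hC hx)))
    -- KA : an ω-clique inside s.erase v meets every color class exactly once
    have KA : ∀ (v : {x // x ∈ A}) (C : Finset V), G.IsClique (C : Set V) →
        C ⊆ s.erase ↑v → C.card = ω → ∀ j : Fin ω, (C ∩ SS (some (v, j))).card = 1 := by
      intro v C hCq hC hCc j
      rw [hinter v C hC j]
      exact forced_ones (fun jj _ => hfible v C hCq hC jj)
        (le_of_eq (hCc ▸ hfibsum v C hC)) (j : ℕ) (Finset.mem_range.mpr j.isLt)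
    have hCA1 : ∀ l, (CC l ∩ A).card ≤ 1 := fun l => card_inter_le_one (hCclique l) hAind
    have hsub_erase : ∀ (l : ι) (v : V), v ∉ CC l → CC l ⊆ s.erase v := by
      intro l v hv x hx
      exact Finset.mem_erase.mpr ⟨fun h => hv (h ▸ hx), hCsub l hx⟩
    have hdisj_empty : ∀ l, CC l ∩ SS l = ∅ :=
      fun l => Finset.disjoint_iff_inter_eq_empty.mp (hCdisj l)
    -- KB : the off-diagonal intersections have exactly one element
    have KB : ∀ k l : ι, k ≠ l → (CC l ∩ SS k).card = 1 := by
      rintro (_ | ⟨v, j⟩) l hkl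
      · -- k = none : intersection with A
        match l with
        | none => exact absurd rfl hkl
        | some (v, j) =>
          by_cases hvC : ↑v ∈ CC (some (v, j))
          · refine le_antisymm (hCA1 _) (Finset.card_pos.mpr ⟨↑v, Finset.mem_inter.mpr ⟨hvC, v.2⟩⟩)
          · have h1 := KA v (CC (some (v, j))) (hCclique _) (hsub_erase _ _ hvC) (hCcard _) j
            rw [hdisj_empty (some (v, j))] at h1
            simp at h1
      · -- k = some (v, j)
        by_cases hvC : ↑v ∈ CC l
        · match l with
          | none =>
            exfalso
            have : (↑v : V) ∈ CC none ∩ SS none := Finset.mem_inter.mpr ⟨hvC, v.2⟩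
            rw [hdisj_empty none] at this
            simp at this
          | some (w, j') =>
            by_cases hwv : w = v
            · subst hwv
              have hjj' : j ≠ j' := fun h => hkl (by rw [h])
              set C' := (CC (some (w, j'))).erase ↑w with hC'_def
              have hC's : C' ⊆ s.erase ↑w := by
                intro x hx
                rw [Finset.mem_erase] at hx ⊢
                exact ⟨hx.1, hCsub _ hx.2⟩
              have hC'q : G.IsClique (C' : Set V) :=
                (hCclique _).subset (by exact_mod_cast Finset.erase_subset _ _)
              have hC'c : C'.card = ω - 1 := by
                rw [hC'_def, Finset.card_erase_of_mem hvC, hCcard]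
              have hzero : (C'.filter (fun x => cfun w x = (j' : ℕ))).card = 0 := by
                rw [Finset.card_eq_zero, Finset.filter_eq_empty_iff]
                intro x hx hcx
                have hxS : x ∈ SS (some (w, j')) := by
                  simp only [SS, Finset.mem_filter]
                  exact ⟨hC's hx, hcx⟩
                have : x ∈ CC (some (w, j')) ∩ SS (some (w, j')) :=
                  Finset.mem_inter.mpr ⟨Finset.mem_of_mem_erase hx, hxS⟩
                rw [hdisj_empty] at this
                simp at this
              have hone := forced_ones' (fun jj _ => hfible w C' hC'q hC's jj)
                (Finset.mem_range.mpr j'.isLt) hzero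
                (le_of_eq (hC'c ▸ hfibsum w C' hC's)) (j : ℕ)
                (Finset.mem_range.mpr j.isLt)
                (fun h => hjj' (Fin.ext h))
              have heq : CC (some (w, j')) ∩ SS (some (w, j)) = C' ∩ SS (some (w, j)) := by
                ext x
                simp only [Finset.mem_inter, hC'_def, Finset.mem_erase]
                constructor
                · rintro ⟨hxC, hxS⟩
                  refine ⟨⟨fun h => ?_, hxC⟩, hxS⟩
                  subst h
                  exact (Finset.notMem_erase _ _) (Finset.mem_of_mem_filter _ hxS)
                · rintro ⟨⟨-, hxC⟩, hxS⟩
                  exact ⟨hxC, hxS⟩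
              rw [heq, hinter w C' hC's j]
              exact hone
            · exfalso
              have hwv' : (↑w : V) ≠ ↑v := fun h => hwv (Subtype.ext h)
              have hwC : ↑w ∉ CC (some (w, j')) := by
                intro hwC
                exact hwv' (Finset.card_le_one.mp (hCA1 _)
                  _ (Finset.mem_inter.mpr ⟨hwC, w.2⟩) _ (Finset.mem_inter.mpr ⟨hvC, v.2⟩))
              have h1 := KA w (CC (some (w, j'))) (hCclique _) (hsub_erase _ _ hwC) (hCcard _) j'
              rw [hdisj_empty (some (w, j'))] at h1
              simp at h1
        · exact KA v (CC l) (hCclique l) (hsub_erase l _ hvC) (hCcard l) j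
    -- characteristic vectors and linear independence
    set a : ι → ({x // x ∈ s} → ℚ) := fun k x => if (↑x : V) ∈ SS k then 1 else 0 with ha_def
    set b : ι → ({x // x ∈ s} → ℚ) := fun l x => if (↑x : V) ∈ CC l then 1 else 0 with hb_def
    have hinner : ∀ k l, (∑ x : {x // x ∈ s}, a k x * b l x) = ((SS k ∩ CC l).card : ℚ) := by
      intro k l
      have h1 : ∀ x : {x // x ∈ s}, a k x * b l x
          = if (↑x : V) ∈ SS k ∩ CC l then 1 else 0 := by
        intro x
        by_cases h1 : (↑x : V) ∈ SS k <;> by_cases h2 : (↑x : V) ∈ CC l <;>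
          simp [ha_def, hb_def, h1, h2, Finset.mem_inter]
      rw [Finset.sum_congr rfl (fun x _ => h1 x), Finset.univ_eq_attach,
        Finset.sum_attach s (fun y => if y ∈ SS k ∩ CC l then (1 : ℚ) else 0),
        Finset.sum_ite_mem, Finset.inter_eq_right.mpr
          ((Finset.inter_subset_left).trans (hSsub k)), Finset.sum_const]
      simp
    have hcardι : Fintype.card ι = α * ω + 1 := by
      simp [hι_def, Fintype.card_coe, hAcard, hα_def]
    have hlin : LinearIndependent ℚ a := by
      rw [Fintype.linearIndependent_iff]
      intro g hg
      have hE : ∀ l, (∑ k, g k * ((SS k ∩ CC l).card : ℚ)) = 0 := by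
        intro l
        have h0 : ∑ x : {x // x ∈ s}, (∑ k, g k • a k) x * b l x = 0 := by
          rw [hg]
          simp
        calc (∑ k, g k * ((SS k ∩ CC l).card : ℚ))
            = ∑ k, g k * (∑ x : {x // x ∈ s}, a k x * b l x) := by
              refine Finset.sum_congr rfl fun k _ => ?_
              rw [hinner k l]
          _ = ∑ k, ∑ x : {x // x ∈ s}, g k * (a k x * b l x) := by
              refine Finset.sum_congr rfl fun k _ => ?_
              rw [Finset.mul_sum]
          _ = ∑ x : {x // x ∈ s}, ∑ k, g k * (a k x * b l x) := Finset.sum_comm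
          _ = ∑ x : {x // x ∈ s}, (∑ k, g k • a k) x * b l x := by
              refine Finset.sum_congr rfl fun x _ => ?_
              rw [Finset.sum_apply, Finset.sum_mul]
              refine Finset.sum_congr rfl fun k _ => ?_
              simp [mul_assoc]
          _ = 0 := h0
      have hM : ∀ l, (∑ k, g k * ((SS k ∩ CC l).card : ℚ)) = (∑ k, g k) - g l := by
        intro l
        have hstep : ∀ k : ι, g k * ((SS k ∩ CC l).card : ℚ)
            = if k = l then 0 else g k := by
          intro k
          by_cases hk : k = l
          · subst hk
            rw [Finset.inter_comm, hdisj_empty k]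
            simp
          · rw [Finset.inter_comm, KB k l hk]
            simp [hk]
        rw [Finset.sum_congr rfl (fun k _ => hstep k)]
        have e1 : (∑ k : ι, if k = l then 0 else g k)
            = (if l = l then (0 : ℚ) else g l)
              + ∑ k ∈ Finset.univ.erase l, (if k = l then 0 else g k) :=
          (Finset.add_sum_erase _ _ (Finset.mem_univ l)).symm
        have e2 : (∑ k ∈ Finset.univ.erase l, if k = l then (0 : ℚ) else g k)
            = ∑ k ∈ Finset.univ.erase l, g k :=
          Finset.sum_congr rfl fun k hk => if_neg (Finset.mem_erase.mp hk).1
        have e3 : (∑ k ∈ Finset.univ.erase l, g k) = (∑ k, g k) - g l :=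
          Finset.sum_erase_eq_sub (Finset.mem_univ l)
        rw [e1, e2, e3]
        simp
      have hgl : ∀ l, g l = ∑ k, g k := by
        intro l
        have := hE l
        rw [hM l] at this
        linarith
      have hT : (∑ k, g k) = (Fintype.card ι : ℚ) * (∑ k, g k) := by
        conv_lhs => rw [Finset.sum_congr rfl (fun l _ => hgl l)]
        rw [Finset.sum_const, Finset.card_univ, nsmul_eq_mul]
      have hN2 : (2 : ℚ) ≤ (Fintype.card ι : ℚ) := by
        rw [hcardι]
        have : 2 ≤ α * ω + 1 := by nlinarith [hω1, hα1]
        exact_mod_cast this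
      have hT0 : (∑ k, g k) = 0 := by
        have h1 : ((Fintype.card ι : ℚ) - 1) * (∑ k, g k) = 0 := by ring_nf; linarith [hT]
        rcases mul_eq_zero.mp h1 with h | h
        · linarith
        · exact h
      intro i
      rw [hgl i, hT0]
    have hle := hlin.fintype_card_le_finrank
    rw [Module.finrank_fintype_fun_eq_card, Fintype.card_coe, hcardι] at hle
    have hH := H s
    rw [← hω_def, ← hα_def] at hH
    have hcomm : ω * α = α * ω := Nat.mul_comm _ _
    omega

lemma isPerfect_iff_bound (G : SimpleGraph V) :
    IsPerfect G ↔ ∀ s : Finset V, s.card ≤ omegaOn G s * omegaOn Gᶜ s := by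
  rw [isPerfect_iff_colOn]
  exact ⟨card_le_mul_of_colOn, fun h s => core G h s.card s le_rfl⟩

end WPGT

/-- Weak Perfect Graph Theorem, Lovász: a finite graph is perfect if and
only if its complement is perfect. -/
theorem weak_perfect_graph_theorem {V : Type*} [Fintype V] (G : SimpleGraph V) :
    IsPerfect G ↔ IsPerfect Gᶜ := by
  classical
  rw [WPGT.isPerfect_iff_bound G, WPGT.isPerfect_iff_bound Gᶜ]
  simp only [compl_compl]
  exact ⟨fun h s => Nat.mul_comm _ _ ▸ h s, fun h s => Nat.mul_comm _ _ ▸ h s⟩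
end

section
/- Let φ be a CNF formula with variable set X = {x_1, …, x_n} and clause set C = {C_1, …, C_m}, where each clause is a set of literals and no clause contains both a variable and its negation, and let G_φ be the graph associated to φ (defined in the context). Then the complement of G_φ contains no induced cycle of odd length at least 5. -/
variable {V : Type*}

/-- The embedding `u : Fin k ↪ V` is an induced `k`-cycle in `G`: the vertices
`u 0, u 1, …, u (k-1)` are distinct and two of them are adjacent exactly when they are
consecutive (cyclically). -/
def IsInducedCycleOn (G : SimpleGraph V) {k : ℕ} (u : Fin k ↪ V) : Prop :=
  ∀ i j : Fin k, G.Adj (u i) (u j) ↔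
    ((j : ℕ) = ((i : ℕ) + 1) % k ∨ (i : ℕ) = ((j : ℕ) + 1) % k)

/-- `G` contains an induced cycle of length `k`. -/
def HasInducedCycle (G : SimpleGraph V) (k : ℕ) : Prop :=
  ∃ u : Fin k ↪ V, IsInducedCycleOn G u

/-- Vertices of the graph associated to a CNF formula with `n` variables and `m` clauses:
literal vertices `(x, b)` (the literal is `x` if `b = true` and `¬x` if `b = false`),
and two clause vertices for each clause. -/
abbrev FormulaVertex (n m : ℕ) := (Fin n × Bool) ⊕ (Fin m × Fin 2)

/-- Adjacency of the graph associated to a CNF formula: two literal vertices are adjacent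
iff they belong to distinct variables; a literal vertex is adjacent to a clause vertex iff
the literal does not occur in the clause; clause vertices are pairwise non-adjacent. -/
def formulaAdj {n m : ℕ} (C : Fin m → Finset (Fin n × Bool)) :
    FormulaVertex n m → FormulaVertex n m → Prop
  | .inl p, .inl q => p.1 ≠ q.1
  | .inl q, .inr c => q ∉ C c.1
  | .inr c, .inl q => q ∉ C c.1
  | .inr _, .inr _ => False

/-- The graph `G_φ` associated to a CNF formula `φ` whose clauses are given by
`C : Fin m → Finset (Fin n × Bool)`. -/
def formulaGraph {n m : ℕ} (C : Fin m → Finset (Fin n × Bool)) :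
    SimpleGraph (FormulaVertex n m) where
  Adj := formulaAdj C
  symm := by
    constructor
    rintro (p | c) (q | d) h
    · exact fun e => h e.symm
    · exact h
    · exact h
    · exact h.elim
  loopless := by
    constructor
    rintro (p | c) h
    · exact h rfl
    · exact h

/-- No clause contains both a variable and its negation. -/
def NoComplementaryLiterals {n m : ℕ} (C : Fin m → Finset (Fin n × Bool)) : Prop :=
  ∀ c : Fin m, ∀ x : Fin n, ¬ ((x, true) ∈ C c ∧ (x, false) ∈ C c)

/-- the complement of the graph associated to a CNF formula contains no
induced cycle of odd length at least `5`. -/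
theorem formulaGraph_compl_no_odd_hole {n m : ℕ} (C : Fin m → Finset (Fin n × Bool))
    (hC : NoComplementaryLiterals C) :
    ∀ k : ℕ, 5 ≤ k → Odd k → ¬ HasInducedCycle (formulaGraph C)ᶜ k := by
  intro k hk _hodd hcyc
  obtain ⟨t, rfl⟩ : ∃ t, k = t + 5 := ⟨k - 5, by omega⟩
  obtain ⟨u, hu⟩ := hcyc
  -- value computations for small constants
  have hv0 : ((0 : Fin (t+5)) : ℕ) = 0 := rfl
  have hv1 : ((1 : Fin (t+5)) : ℕ) = 1 := rfl
  have hv2 : ((2 : Fin (t+5)) : ℕ) = 2 := rfl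
  have hv3 : ((3 : Fin (t+5)) : ℕ) = 3 := rfl
  have hv4 : ((4 : Fin (t+5)) : ℕ) = 4 := rfl
  have hsucc : ∀ i : Fin (t+5), ((i + 1 : Fin (t+5)) : ℕ) = ((i : ℕ) + 1) % (t+5) := by
    intro i; rw [Fin.val_add, hv1]
  -- restate cycle condition with Fin arithmetic
  have hiff : ∀ i j : Fin (t+5),
      (formulaGraph C)ᶜ.Adj (u i) (u j) ↔ (j = i + 1 ∨ i = j + 1) := by
    intro i j
    rw [hu i j]
    constructor <;> rintro (h | h)
    · exact Or.inl (Fin.ext (by rw [hsucc]; exact h))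
    · exact Or.inr (Fin.ext (by rw [hsucc]; exact h))
    · exact Or.inl (by rw [h, hsucc])
    · exact Or.inr (by rw [h, hsucc])
  -- two distinct clause vertices on the cycle must be consecutive
  have hadj_inr : ∀ (i j : Fin (t+5)) (c d : Fin m × Fin 2),
      u i = Sum.inr c → u j = Sum.inr d → i ≠ j → (j = i + 1 ∨ i = j + 1) := by
    intro i j c d hi hj hij
    rw [← hiff]
    have hne : u i ≠ u j := fun e => hij (u.injective e)
    rw [hi, hj] at hne ⊢
    exact ⟨hne, fun h => h⟩
  -- neighbors of a literal vertex on the cycle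
  have hnbr : ∀ (i j : Fin (t+5)) (p : Fin n × Bool), u i = Sum.inl p →
      (formulaGraph C)ᶜ.Adj (u i) (u j) →
      u j = Sum.inl (p.1, !p.2) ∨ ∃ c, u j = Sum.inr c := by
    intro i j p hi hadj
    rw [hi] at hadj
    rcases hq : u j with q | c
    · left
      rw [hq] at hadj
      obtain ⟨hne', hnadj⟩ := hadj
      have hvar : p.1 = q.1 := by
        by_contra hx
        exact hnadj hx
      have hb : p.2 ≠ q.2 := by
        intro hb2
        exact hne' (by rw [Prod.ext hvar hb2])
      have h2 : q.2 = !p.2 := by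
        cases hp2 : p.2 <;> cases hq2 : q.2 <;> simp_all
      exact congrArg Sum.inl (Prod.ext hvar.symm h2)
    · exact Or.inr ⟨c, rfl⟩
  -- no two consecutive literal vertices on the cycle
  have key : ∀ i : Fin (t+5), (∃ p, u i = Sum.inl p) → (∃ q, u (i+1) = Sum.inl q) → False := by
    intro i hpi hqi
    obtain ⟨p, hp⟩ := hpi
    obtain ⟨q, hq⟩ := hqi
    have hadj1 : (formulaGraph C)ᶜ.Adj (u i) (u (i+1)) := (hiff i (i+1)).mpr (Or.inl rfl)
    have hq' : u (i+1) = Sum.inl (p.1, !p.2) := by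
      rcases hnbr i (i+1) p hp hadj1 with h | ⟨c, hc⟩
      · exact h
      · rw [hq] at hc; exact absurd hc (by simp)
    have hadj2 : (formulaGraph C)ᶜ.Adj (u (i+1)) (u (i+2)) :=
      (hiff (i+1) (i+2)).mpr (Or.inl (by open Fin.CommRing in ring))
    have hadj0 : (formulaGraph C)ᶜ.Adj (u (i-1)) (u i) :=
      (hiff (i-1) i).mpr (Or.inl (by open Fin.CommRing in ring))
    -- u (i+2) must be a clause vertex
    have hc2 : ∃ c, u (i+2) = Sum.inr c := by
      rcases hnbr (i+1) (i+2) (p.1, !p.2) hq' hadj2 with h | h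
      · exfalso
        have heq : u (i+2) = u i := by
          rw [h, hp]; simp
        have := u.injective heq
        have hval := congrArg Fin.val (add_left_cancel
          (show i + 2 = i + 0 by rw [add_zero]; exact this))
        rw [hv2, hv0] at hval
        omega
      · exact h
    -- u (i-1) must be a clause vertex
    have hc0 : ∃ c, u (i-1) = Sum.inr c := by
      rcases hnbr i (i-1) p hp hadj0.symm with h | h
      · exfalso
        have heq : u (i-1) = u (i+1) := by rw [h, hq']
        have h2 : i - 1 = i + 1 := u.injective heq
        have h4 := congrArg (· + 1) h2
        rw [sub_add_cancel] at h4
        have h3 : i + 0 = i + 2 := by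
          calc i + 0 = i := add_zero i
          _ = i + 1 + 1 := h4
          _ = i + 2 := by open Fin.CommRing in ring
        have hval := congrArg Fin.val (add_left_cancel h3)
        rw [hv0, hv2] at hval
        omega
      · exact h
    obtain ⟨c0, h0⟩ := hc0
    obtain ⟨c2, h2⟩ := hc2
    have hij : i - 1 ≠ i + 2 := by
      intro h
      have h4 := congrArg (· + 1) h
      rw [sub_add_cancel] at h4
      have h3 : i + 0 = i + 3 := by
        calc i + 0 = i := add_zero i
        _ = i + 2 + 1 := h4
        _ = i + 3 := by open Fin.CommRing in ring
      have hval := congrArg Fin.val (add_left_cancel h3)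
      rw [hv0, hv3] at hval
      omega
    rcases hadj_inr (i-1) (i+2) c0 c2 h0 h2 hij with h | h
    · -- i + 2 = (i - 1) + 1 = i
      have h3 : i + 2 = i + 0 := by
        rw [h]; open Fin.CommRing in ring
      have hval := congrArg Fin.val (add_left_cancel h3)
      rw [hv2, hv0] at hval
      omega
    · -- i - 1 = (i + 2) + 1 → i + 0 = i + 4
      have h4 := congrArg (· + 1) h
      rw [sub_add_cancel] at h4
      have h3 : i + 0 = i + 4 := by
        calc i + 0 = i := add_zero i
        _ = i + 2 + 1 + 1 := h4
        _ = i + 4 := by open Fin.CommRing in ring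
      have hval := congrArg Fin.val (add_left_cancel h3)
      rw [hv0, hv4] at hval
      omega
  -- final contradiction
  rcases h0 : u 0 with p0 | c0
  · -- u 0 is a literal vertex; then u 1 and u (-1) are clause vertices
    have h1 : ∃ c, u (0+1) = Sum.inr c := by
      rcases hq : u (0+1) with q | c
      · exact absurd (key 0 ⟨p0, h0⟩ ⟨q, hq⟩) (by simp)
      · exact ⟨c, rfl⟩
    have h2 : ∃ c, u (0-1) = Sum.inr c := by
      rcases hq : u (0-1) with q | c
      · refine absurd (key (0-1) ⟨q, hq⟩ ⟨p0, ?_⟩) (by simp)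
        rw [show (0:Fin (t+5)) - 1 + 1 = 0 by open Fin.CommRing in ring]
        exact h0
      · exact ⟨c, rfl⟩
    obtain ⟨c1, hc1⟩ := h1
    obtain ⟨c2, hc2⟩ := h2
    have hne12 : (0+1 : Fin (t+5)) ≠ 0-1 := by
      intro h
      have h3 : (0:Fin (t+5)) + 1 + 1 = 0 - 1 + 1 := by rw [h]
      rw [sub_add_cancel] at h3
      have h4 : (0:Fin (t+5)) + 2 = 0 + 0 := by
        calc (0:Fin (t+5)) + 2 = 0 + 1 + 1 := by open Fin.CommRing in ring
        _ = 0 := h3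
        _ = 0 + 0 := (add_zero 0).symm
      have hval := congrArg Fin.val (add_left_cancel h4)
      rw [hv2, hv0] at hval
      omega
    rcases hadj_inr (0+1) (0-1) c1 c2 hc1 hc2 hne12 with h | h
    · -- 0 - 1 = 0 + 1 + 1 → 0 + 0 = 0 + 3
      have h4 := congrArg (· + 1) h
      rw [sub_add_cancel] at h4
      have h3 : (0:Fin (t+5)) + 0 = 0 + 3 := by
        calc (0:Fin (t+5)) + 0 = 0 := add_zero 0
        _ = 0 + 1 + 1 + 1 := h4
        _ = 0 + 3 := by open Fin.CommRing in ring
      have hval := congrArg Fin.val (add_left_cancel h3)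
      rw [hv0, hv3] at hval
      omega
    · -- 0 + 1 = 0 - 1 + 1 = 0
      rw [sub_add_cancel] at h
      have h3 : (0:Fin (t+5)) + 1 = 0 + 0 := by
        calc (0:Fin (t+5)) + 1 = 0 := h
        _ = 0 + 0 := (add_zero 0).symm
      have hval := congrArg Fin.val (add_left_cancel h3)
      rw [hv1, hv0] at hval
      omega
  · -- u 0 is a clause vertex
    rcases h2 : u 2 with p2 | c2'
    · -- u 2 is a literal; then u 1 and u 3 are clause vertices
      have hu1 : ∃ c, u 1 = Sum.inr c := by
        rcases hq : u 1 with q | c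
        · refine absurd (key 1 ⟨q, hq⟩ ⟨p2, ?_⟩) (by simp)
          rw [show (1:Fin (t+5)) + 1 = 2 by open Fin.CommRing in ring]
          exact h2
        · exact ⟨c, rfl⟩
      have hu3 : ∃ c, u 3 = Sum.inr c := by
        rcases hq : u 3 with q | c
        · refine absurd (key 2 ⟨p2, h2⟩ ⟨q, ?_⟩) (by simp)
          rw [show (2:Fin (t+5)) + 1 = 3 by open Fin.CommRing in ring]
          exact hq
        · exact ⟨c, rfl⟩
      obtain ⟨d1, hd1⟩ := hu1
      obtain ⟨d3, hd3⟩ := hu3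
      have hne13 : (1 : Fin (t+5)) ≠ 3 := by
        intro h
        have hval := congrArg Fin.val h
        rw [hv1, hv3] at hval
        omega
      rcases hadj_inr 1 3 d1 d3 hd1 hd3 hne13 with h | h
      · rw [show (1:Fin (t+5)) + 1 = 2 by open Fin.CommRing in ring] at h
        have hval := congrArg Fin.val h
        rw [hv3, hv2] at hval
        omega
      · rw [show (3:Fin (t+5)) + 1 = 4 by open Fin.CommRing in ring] at h
        have hval := congrArg Fin.val h
        rw [hv1, hv4] at hval
        omega
    · -- u 0 and u 2 both clause vertices: contradiction
      have hne02 : (0 : Fin (t+5)) ≠ 2 := by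
        intro h
        have hval := congrArg Fin.val h
        rw [hv0, hv2] at hval
        omega
      rcases hadj_inr 0 2 c0 c2' h0 h2 hne02 with h | h
      · rw [show (0:Fin (t+5)) + 1 = 1 by open Fin.CommRing in ring] at h
        have hval := congrArg Fin.val h
        rw [hv2, hv1] at hval
        omega
      · rw [show (2:Fin (t+5)) + 1 = 3 by open Fin.CommRing in ring] at h
        have hval := congrArg Fin.val h
        rw [hv0, hv3] at hval
        omega
end

section
/- Let φ be a CNF formula with variable set X = {x_1, …, x_n} and clause set C = {C_1, …, C_m}, where each clause is a set of literals and no clause contains both a variable and its negation, and let G_φ be the graph associated to φ (defined in the context). Then G_φ contains no induced cycle of odd length at least 5. -/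
variable {V : Type*}

/-- the graph associated to a CNF formula contains no induced cycle of odd
length at least `5`. -/
theorem formulaGraph_no_odd_hole {n m : ℕ} (C : Fin m → Finset (Fin n × Bool))
    (hC : NoComplementaryLiterals C) :
    ∀ k : ℕ, 5 ≤ k → Odd k → ¬ HasInducedCycle (formulaGraph C) k := by
  intro k hk hodd
  rintro ⟨u, hu⟩
  have hk0 : 0 < k := by omega
  set G := formulaGraph C with hG
  let pos : ℕ → Fin k := fun s => ⟨s % k, Nat.mod_lt _ hk0⟩
  -- distinct residues for offsets between 1 and k-1
  have hmod : ∀ a b : ℕ, a < b → b < a + k → a % k ≠ b % k := by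
    intro a b h1 h2 h
    have h' : a ≡ b [MOD k] := h
    rw [Nat.modEq_iff_dvd' (by omega)] at h'
    have := Nat.le_of_dvd (by omega) h'
    omega
  have consecAdj : ∀ s : ℕ, G.Adj (u (pos s)) (u (pos (s + 1))) := by
    intro s
    refine (hu (pos s) (pos (s + 1))).mpr (Or.inl ?_)
    show (s + 1) % k = (s % k + 1) % k
    rw [Nat.mod_add_mod]
  have nonAdj : ∀ s t : ℕ, (t % k ≠ (s + 1) % k) → (s % k ≠ (t + 1) % k) →
      ¬ G.Adj (u (pos s)) (u (pos t)) := by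
    intro s t h1 h2 h
    rcases (hu (pos s) (pos t)).mp h with h' | h'
    · apply h1
      calc t % k = (s % k + 1) % k := h'
        _ = (s + 1) % k := by rw [Nat.mod_add_mod]
    · apply h2
      calc s % k = (t % k + 1) % k := h'
        _ = (t + 1) % k := by rw [Nat.mod_add_mod]
  have samevar : ∀ s t : ℕ, (t % k ≠ (s + 1) % k) → (s % k ≠ (t + 1) % k) →
      ∀ p q : Fin n × Bool, u (pos s) = Sum.inl p → u (pos t) = Sum.inl q → p.1 = q.1 := by
    intro s t h1 h2 p q hp hq
    by_contra hne
    refine nonAdj s t h1 h2 ?_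
    rw [hp, hq]
    exact hne
  have litOr : ∀ s : ℕ, (∃ p, u (pos s) = Sum.inl p) ∨ (∃ c, u (pos s) = Sum.inr c) := by
    intro s
    cases h : u (pos s) with
    | inl p => exact Or.inl ⟨p, rfl⟩
    | inr c => exact Or.inr ⟨c, rfl⟩
  have oneLit : ∀ s : ℕ, (∃ p, u (pos s) = Sum.inl p) ∨ (∃ p, u (pos (s + 1)) = Sum.inl p) := by
    intro s
    rcases litOr s with h | ⟨c, hc⟩
    · exact Or.inl h
    rcases litOr (s + 1) with h | ⟨d, hd⟩
    · exact Or.inr h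
    have := consecAdj s
    rw [hc, hd] at this
    exact this.elim
  -- since k is odd, there are two consecutive literal positions
  obtain ⟨t, p, q, hp, hq⟩ :
      ∃ (t : ℕ) (p q : Fin n × Bool), u (pos t) = Sum.inl p ∧ u (pos (t + 1)) = Sum.inl q := by
    by_contra hno
    push_neg at hno
    have step : ∀ s, (∃ p, u (pos s) = Sum.inl p) ↔ ¬ (∃ p, u (pos (s + 1)) = Sum.inl p) := by
      intro s
      constructor
      · rintro ⟨p, hp⟩ ⟨q, hq⟩
        exact hno s p q hp hq
      · intro h
        rcases oneLit s with h' | h'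
        · exact h'
        · exact absurd h' h
    have evenstep : ∀ j, ((∃ p, u (pos (2 * j)) = Sum.inl p) ↔ (∃ p, u (pos 0) = Sum.inl p)) := by
      intro j
      induction j with
      | zero => simp
      | succ j ih =>
        have h1 := step (2 * j)
        have h2 := step (2 * j + 1)
        have e : 2 * (j + 1) = 2 * j + 1 + 1 := by ring
        rw [e]
        tauto
    obtain ⟨j, hj⟩ := hodd
    have hkpos : pos k = pos 0 := by
      apply Fin.ext
      show k % k = 0 % k
      simp
    have h1 := step (2 * j)
    have h2 := evenstep j
    rw [show 2 * j + 1 = k by omega, hkpos] at h1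
    tauto
  have hXY : p.1 ≠ q.1 := by
    have := consecAdj t
    rw [hp, hq] at this
    exact this
  rcases litOr (t + 3) with ⟨r, hr⟩ | ⟨c, hc⟩
  · have h1 : r.1 = p.1 := samevar (t + 3) t
      (hmod t (t + 3 + 1) (by omega) (by omega))
      (Ne.symm (hmod (t + 1) (t + 3) (by omega) (by omega))) r p hr hp
    have h2 : r.1 = q.1 := samevar (t + 3) (t + 1)
      (hmod (t + 1) (t + 3 + 1) (by omega) (by omega))
      (hmod (t + 1 + 1) (t + 3) (by omega) (by omega)).symm r q hr hq
    exact hXY (h1.symm.trans h2)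
  · -- t+3 is a clause vertex, so t+2 and t+4 are literals
    obtain ⟨a, ha⟩ : ∃ a, u (pos (t + 2)) = Sum.inl a := by
      rcases oneLit (t + 2) with h | ⟨b, hb⟩
      · exact h
      · rw [show t + 2 + 1 = t + 3 by omega, hc] at hb
        exact absurd hb (by simp)
    obtain ⟨b, hb⟩ : ∃ b, u (pos (t + 4)) = Sum.inl b := by
      rcases oneLit (t + 3) with ⟨b, hb⟩ | h
      · rw [hc] at hb
        exact absurd hb (by simp)
      · rw [show t + 3 + 1 = t + 4 by omega] at h
        exact h
    have hA : a.1 = p.1 := samevar (t + 2) t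
      (hmod t (t + 2 + 1) (by omega) (by omega))
      (Ne.symm (hmod (t + 1) (t + 2) (by omega) (by omega))) a p ha hp
    have hB : b.1 = q.1 := samevar (t + 4) (t + 1)
      (hmod (t + 1) (t + 4 + 1) (by omega) (by omega))
      (hmod (t + 1 + 1) (t + 4) (by omega) (by omega)).symm b q hb hq
    have hAB : a.1 = b.1 := samevar (t + 2) (t + 4)
      (hmod (t + 2 + 1) (t + 4) (by omega) (by omega)).symm
      (hmod (t + 2) (t + 4 + 1) (by omega) (by omega)) a b ha hb
    exact hXY (hA.symm.trans (hAB.trans hB))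
end

section
/- Let φ be a CNF formula with variable set X = {x_1, …, x_n} and clause set C = {C_1, …, C_m}, where each clause is a set of literals and no clause contains both a variable and its negation, and let G_φ be the graph associated to φ (defined in the context). Then every induced cycle of odd length at least 5 in G_φ contains at most 3 literal vertices. -/
variable {V : Type*}

private lemma mod_succ_eq (a k : ℕ) (h : a < k) :
    (a + 1) % k = if a + 1 = k then 0 else a + 1 := by
  split
  · next h' => simp [h', Nat.mod_self]
  · next h' => exact Nat.mod_eq_of_lt (by omega)

private lemma consec_char {a b k : ℕ} (ha : a < k) (hb : b < k) :
    (b = (a + 1) % k ∨ a = (b + 1) % k) ↔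
    (b = a + 1 ∨ a = b + 1 ∨ (a = 0 ∧ b = k - 1) ∨ (b = 0 ∧ a = k - 1)) := by
  rw [mod_succ_eq a k ha, mod_succ_eq b k hb]
  split <;> split <;> omega

/-- every induced cycle of odd length at least `5` in the graph associated
to a CNF formula contains at most `3` literal vertices. -/
theorem formulaGraph_odd_hole_few_literal_vertices {n m : ℕ}
    (C : Fin m → Finset (Fin n × Bool)) (hC : NoComplementaryLiterals C)
    (k : ℕ) (hk : 5 ≤ k) (hodd : Odd k) (u : Fin k ↪ FormulaVertex n m)
    (hu : IsInducedCycleOn (formulaGraph C) u) :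
    (Finset.univ.filter fun i : Fin k => (u i).isLeft = true).card ≤ 3 := by
  by_contra hcard
  push_neg at hcard
  obtain ⟨t, hts, ht4⟩ := Finset.exists_subset_card_eq hcard
  set a : Fin 4 → Fin k := fun j => t.orderEmbOfFin ht4 j with ha_def
  have ha : StrictMono a := (t.orderEmbOfFin ht4).strictMono
  have hmem : ∀ j : Fin 4, (u (a j)).isLeft = true := by
    intro j
    have := hts (t.orderEmbOfFin_mem ht4 j)
    simpa using this
  have hex : ∀ j : Fin 4, ∃ q : Fin n × Bool, u (a j) = Sum.inl q := by
    intro j; exact Sum.isLeft_iff.mp (hmem j)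
  choose p hp using hex
  have hpinj : Function.Injective p := by
    intro i j hij
    have : u (a i) = u (a j) := by rw [hp, hp, hij]
    exact ha.injective (u.injective this)
  have h01 : (a 0 : ℕ) < (a 1 : ℕ) := ha (show (0 : Fin 4) < 1 by decide)
  have h12 : (a 1 : ℕ) < (a 2 : ℕ) := ha (show (1 : Fin 4) < 2 by decide)
  have h23 : (a 2 : ℕ) < (a 3 : ℕ) := ha (show (2 : Fin 4) < 3 by decide)
  have hl3 : (a 3 : ℕ) < k := (a 3).isLt
  have key : ∀ i j : Fin 4, (p i).1 ≠ (p j).1 ↔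
      ((a j : ℕ) = (a i : ℕ) + 1 ∨ (a i : ℕ) = (a j : ℕ) + 1 ∨
        ((a i : ℕ) = 0 ∧ (a j : ℕ) = k - 1) ∨ ((a j : ℕ) = 0 ∧ (a i : ℕ) = k - 1)) := by
    intro i j
    have hadj := hu (a i) (a j)
    rw [hp i, hp j] at hadj
    rw [consec_char (a i).isLt (a j).isLt] at hadj
    exact hadj
  have h02 : (p 0).1 = (p 2).1 := by
    by_contra hne
    have := (key 0 2).mp hne
    omega
  have h13 : (p 1).1 = (p 3).1 := by
    by_contra hne
    have := (key 1 3).mp hne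
    omega
  by_cases hxy : (p 0).1 = (p 1).1
  · have d01 : p 0 ≠ p 1 := fun h => absurd (hpinj h) (by decide)
    have d02 : p 0 ≠ p 2 := fun h => absurd (hpinj h) (by decide)
    have d12 : p 1 ≠ p 2 := fun h => absurd (hpinj h) (by decide)
    have e01 : (p 0).2 ≠ (p 1).2 := fun h => d01 (Prod.ext hxy h)
    have e02 : (p 0).2 ≠ (p 2).2 := fun h => d02 (Prod.ext h02 h)
    have e12 : (p 1).2 ≠ (p 2).2 := fun h => d12 (Prod.ext (hxy.symm.trans h02) h)
    cases hb0 : (p 0).2 <;> cases hb1 : (p 1).2 <;> cases hb2 : (p 2).2 <;> simp_all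
  · have hne12 : (p 1).1 ≠ (p 2).1 := fun h => hxy (h02.trans h.symm)
    have hne23 : (p 2).1 ≠ (p 3).1 := fun h => hxy (h02.trans (h.trans h13.symm))
    have hne03 : (p 0).1 ≠ (p 3).1 := fun h => hxy (h.trans h13.symm)
    have D01 := (key 0 1).mp hxy
    have D12 := (key 1 2).mp hne12
    have D23 := (key 2 3).mp hne23
    have D03 := (key 0 3).mp hne03
    omega
end

section
/- Let φ be a CNF formula with variable set X = {x_1, …, x_n} and clause set C = {C_1, …, C_m}, where each clause is a set of literals and no clause contains both a variable and its negation, and let G_φ be the graph associated to φ (defined in the context). Then G_φ is a perfect graph. -/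
variable {V : Type*}

/-- the graph associated to a CNF formula is perfect. -/
theorem formulaGraph_isPerfect {n m : ℕ} (C : Fin m → Finset (Fin n × Bool))
    (hC : NoComplementaryLiterals C) :
    IsPerfect (formulaGraph C) := by
  classical
  intro W
  haveI : Fintype ↥W := Fintype.ofFinite _
  set H := (formulaGraph C).induce W with hH
  have hadj : ∀ u v : ↥W, H.Adj u v ↔ formulaAdj C u.1 v.1 := fun u v => Iff.rfl
  set Vars : Finset (Fin n) :=
    Finset.univ.filter (fun x => ∃ b, (Sum.inl (x, b) : FormulaVertex n m) ∈ W) with hVars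
  have hmemVars : ∀ x b, (Sum.inl (x, b) : FormulaVertex n m) ∈ W → x ∈ Vars := fun x b h =>
    Finset.mem_filter.mpr ⟨Finset.mem_univ _, b, h⟩
  have hVarsmem : ∀ x ∈ Vars, ∃ b, (Sum.inl (x, b) : FormulaVertex n m) ∈ W := fun x hx =>
    (Finset.mem_filter.mp hx).2
  -- the main reduction: a coloring with N colors plus a clique of size N conclude the proof
  have main : ∀ (N : ℕ), H.Colorable N → ∀ s : Finset ↥W, H.IsClique ↑s → s.card = N →
      H.chromaticNumber = (H.cliqueNum : ℕ∞) := by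
    intro N hcol s hs hcard
    have hω : H.cliqueNum = N := by
      apply le_antisymm
      · refine csSup_le ⟨0, ∅, ?_⟩ ?_
        · exact SimpleGraph.isNClique_empty.mpr rfl
        · rintro n ⟨t, ht⟩
          exact ht.card_eq ▸ ht.isClique.card_le_of_colorable hcol
      · exact hcard ▸ SimpleGraph.IsClique.card_le_cliqueNum (tc := hs)
    have hχle : H.chromaticNumber ≤ N := hcol.chromaticNumber_le
    have hχge : (N : ℕ∞) ≤ H.chromaticNumber := by
      rw [SimpleGraph.chromaticNumber]
      refine le_iInf₂ fun n hn => ?_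
      exact_mod_cast hcard ▸ hs.card_le_of_colorable hn
    rw [hω]
    exact le_antisymm hχle hχge
  by_cases hU : ∃ p : Fin m × Fin 2, (Sum.inr p : FormulaVertex n m) ∈ W ∧
      ∀ x ∈ Vars, ∃ b, (Sum.inl (x, b) : FormulaVertex n m) ∈ W ∧ (x, b) ∉ C p.1
  · -- some clause vertex is "unblocked": N = Vars.card + 1
    obtain ⟨p, hpW, hpb⟩ := hU
    choose b hbW hbC using hpb
    -- coloring with Option ↥Vars
    have col : H.Coloring (Option ↥Vars) := by
      refine SimpleGraph.Coloring.mk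
        (fun v => match v with
          | ⟨Sum.inl q, hq⟩ => some ⟨q.1, hmemVars q.1 q.2 hq⟩
          | ⟨Sum.inr _, _⟩ => none) ?_
      rintro ⟨(⟨x, bx⟩ | p1), hu⟩ ⟨(⟨y, by'⟩ | p2), hv⟩ hadj' heq
      · exact (hadj _ _).mp hadj' (by simpa using heq)
      · simp at heq
      · simp at heq
      · exact (hadj _ _).mp hadj'
    have hcol : H.Colorable (Vars.card + 1) := by
      have := col.colorable
      simpa [Fintype.card_option, Fintype.card_coe] using this
    -- clique
    set s : Finset ↥W := insert ⟨Sum.inr p, hpW⟩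
      (Vars.attach.image fun x => (⟨Sum.inl (x.1, b x.1 x.2), hbW x.1 x.2⟩ : ↥W)) with hs
    have hnotmem : (⟨Sum.inr p, hpW⟩ : ↥W) ∉
        Vars.attach.image fun x => (⟨Sum.inl (x.1, b x.1 x.2), hbW x.1 x.2⟩ : ↥W) := by
      simp [Subtype.ext_iff]
    have hscard : s.card = Vars.card + 1 := by
      rw [hs, Finset.card_insert_of_notMem hnotmem, Finset.card_image_of_injOn, Finset.card_attach]
      intro a _ c _ hac
      simp only [Subtype.mk.injEq, Sum.inl.injEq, Prod.mk.injEq] at hac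
      exact Subtype.ext hac.1
    have hsclique : H.IsClique ↑s := by
      intro u hu v hv huv
      rw [hs] at hu hv
      simp only [Finset.coe_insert, Set.mem_insert_iff, Finset.coe_image, Set.mem_image,
        Finset.mem_coe, Finset.mem_attach, true_and] at hu hv
      rw [hadj]
      obtain hu | ⟨a, rfl⟩ := hu <;> obtain hv | ⟨c, rfl⟩ := hv
      · exact absurd (hu.trans hv.symm) huv
      · subst hu; exact hbC c.1 c.2
      · subst hv; exact hbC a.1 a.2
      · show a.1 ≠ c.1
        intro h
        exact huv (congrArg
          (fun x : ↥Vars => (⟨Sum.inl (x.1, b x.1 x.2), hbW x.1 x.2⟩ : ↥W)) (Subtype.ext h))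
    exact main _ hcol s hsclique hscard
  · -- every clause vertex in W is "blocked": N = Vars.card
    push_neg at hU
    choose xB hxB1 hxB2 using hU
    choose bb hbb using hVarsmem
    have col : H.Coloring (↥Vars) := by
      refine SimpleGraph.Coloring.mk
        (fun v => match v with
          | ⟨Sum.inl q, hq⟩ => ⟨q.1, hmemVars q.1 q.2 hq⟩
          | ⟨Sum.inr p, hp⟩ => ⟨xB p hp, hxB1 p hp⟩) ?_
      rintro ⟨(⟨x, bx⟩ | p1), hu⟩ ⟨(⟨y, by'⟩ | p2), hv⟩ hadj' heq
      · exact (hadj _ _).mp hadj' (by simpa using heq)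
      · have hx : x = xB p2 hv := congrArg Subtype.val heq
        subst hx
        exact (hadj _ _).mp hadj' (hxB2 p2 hv bx hu)
      · have hy : xB p1 hu = y := congrArg Subtype.val heq
        subst hy
        exact (hadj _ _).mp hadj' (hxB2 p1 hu by' hv)
      · exact (hadj _ _).mp hadj'
    have hcol : H.Colorable Vars.card := by
      have := col.colorable
      simpa [Fintype.card_coe] using this
    set s : Finset ↥W :=
      Vars.attach.image fun x => (⟨Sum.inl (x.1, bb x.1 x.2), hbb x.1 x.2⟩ : ↥W) with hs
    have hscard : s.card = Vars.card := by
      rw [hs, Finset.card_image_of_injOn, Finset.card_attach]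
      intro a _ c _ hac
      simp only [Subtype.mk.injEq, Sum.inl.injEq, Prod.mk.injEq] at hac
      exact Subtype.ext hac.1
    have hsclique : H.IsClique ↑s := by
      intro u hu v hv huv
      rw [hs] at hu hv
      simp only [Finset.coe_image, Set.mem_image, Finset.mem_coe, Finset.mem_attach,
        true_and] at hu hv
      rw [hadj]
      obtain ⟨a, rfl⟩ := hu; obtain ⟨c, rfl⟩ := hv
      show a.1 ≠ c.1
      intro h
      exact huv (congrArg
        (fun x : ↥Vars => (⟨Sum.inl (x.1, bb x.1 x.2), hbb x.1 x.2⟩ : ↥W)) (Subtype.ext h))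
    exact main _ hcol s hsclique hscard
end

section
/- Let φ be a CNF formula with variable set X = {x_1, …, x_n} and clause set C = {C_1, …, C_m}, where each clause is a set of literals and no clause contains both a variable and its negation, and let G_φ be the graph associated to φ (defined in the context). Then φ has a satisfying truth assignment if and only if the vertex set of G_φ can be partitioned into n independent sets and one clique (i.e., G_φ is an (n,1)-graph). -/
variable {V : Type*}

/-- a CNF formula with `n` variables is satisfiable if and only if the
associated graph is an `(n,1)`-graph, i.e. its vertex set can be partitioned into `n`
independent sets and one clique. A literal `(x, b)` is made true by the assignment `τ`
exactly when `τ x = b`. -/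
theorem formula_satisfiable_iff_rlGraph {n m : ℕ} (C : Fin m → Finset (Fin n × Bool))
    (hC : NoComplementaryLiterals C) :
    (∃ τ : Fin n → Bool, ∀ c : Fin m, ∃ q ∈ C c, τ q.1 = q.2) ↔
      IsRLGraph n 1 (formulaGraph C) := by
  constructor
  · rintro ⟨τ, hτ⟩
    choose w hw hw2 using hτ
    set V2 : Set (FormulaVertex n m) := {v | ∃ x b, v = Sum.inl (x, b) ∧ b ≠ τ x} with hV2
    refine ⟨V2ᶜ, V2, disjoint_compl_left, by simp, ?_, ?_⟩
    · refine ⟨fun i => insert (Sum.inl (i, τ i))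
        {v | ∃ c j, v = Sum.inr (c, j) ∧ (w c).1 = i}, ?_, ?_, ?_⟩
      · ext v
        constructor
        · rintro hv
          simp only [Set.mem_iUnion, Set.mem_insert_iff, Set.mem_setOf_eq] at hv
          obtain ⟨i, hi⟩ := hv
          rcases hi with h | ⟨c, j, rfl, hcj⟩
          · subst h
            simp only [hV2, Set.mem_compl_iff, Set.mem_setOf_eq]
            rintro ⟨x, b, heq, hb⟩
            rw [Sum.inl.injEq, Prod.mk.injEq] at heq
            exact (hb (heq.2.symm.trans (congrArg τ heq.1))).elim
          · simp only [hV2, Set.mem_compl_iff, Set.mem_setOf_eq]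
            rintro ⟨x, b, heq, hb⟩
            exact nomatch heq
        · intro hv
          rcases v with ⟨x, b⟩ | ⟨c, j⟩
          · have hb : b = τ x := by
              by_contra hb
              exact hv ⟨x, b, rfl, hb⟩
            subst hb
            exact Set.mem_iUnion.2 ⟨x, Set.mem_insert _ _⟩
          · exact Set.mem_iUnion.2 ⟨(w c).1, Set.mem_insert_iff.2
              (Or.inr ⟨c, j, rfl, rfl⟩)⟩
      · intro i j hij
        simp only [Function.onFun, Set.disjoint_left]
        rintro v (rfl | ⟨c, k, rfl, hck⟩) hv
        · rcases hv with h | ⟨c, k, heq, _⟩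
          · rw [Sum.inl.injEq, Prod.mk.injEq] at h
            exact hij h.1
          · exact nomatch heq
        · rcases hv with h | ⟨c', k', heq, hck'⟩
          · exact nomatch h
          · rw [Sum.inr.injEq, Prod.mk.injEq] at heq
            exact hij (hck ▸ heq.1 ▸ hck')
      · intro i
        rintro u hu v hv huv
        rcases hu with rfl | ⟨c, k, rfl, hck⟩
        · rcases hv with rfl | ⟨c, k, rfl, hck⟩
          · exact (huv rfl).elim
          · intro hadj
            have : (i, τ i) ∉ C c := hadj
            have heq : w c = (i, τ i) :=
              Prod.ext hck ((hw2 c).symm.trans (congrArg τ hck))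
            exact this (heq ▸ hw c)
        · rcases hv with rfl | ⟨c', k', rfl, hck'⟩
          · intro hadj
            have : (i, τ i) ∉ C c := hadj
            have heq : w c = (i, τ i) :=
              Prod.ext hck ((hw2 c).symm.trans (congrArg τ hck))
            exact this (heq ▸ hw c)
          · exact fun hadj => hadj
    · refine ⟨fun _ => V2, ?_, ?_, ?_⟩
      · exact Set.iUnion_const V2
      · intro i j hij
        exact absurd (Subsingleton.elim i j) hij
      · intro _
        rintro u ⟨x, b, rfl, hb⟩ v ⟨y, b', rfl, hb'⟩ huv
        have hxy : x ≠ y := by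
          rintro rfl
          have : b = b' := by
            cases b <;> cases b' <;> simp_all
          exact huv (by rw [this])
        exact hxy
  · rintro ⟨V1, V2, hdisj, huniv, ⟨I, hIu, hId, hIind⟩, ⟨K, hKu, hKd, hKcl⟩⟩
    have hK0 : V2 = K 0 := by
      rw [← hKu]; ext v; simp [Set.mem_iUnion, Fin.exists_fin_one]
    have hcl : (formulaGraph C).IsClique V2 := hK0 ▸ hKcl 0
    have hV1 : ∀ v : FormulaVertex n m, v ∉ V2 → v ∈ V1 := by
      intro v hv
      have : v ∈ V1 ∪ V2 := huniv ▸ Set.mem_univ v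
      exact this.resolve_right hv
    -- each variable has a literal in V1
    have hvar : ∀ x : Fin n, ∃ b, Sum.inl (x, b) ∈ V1 := by
      intro x
      by_contra h
      push_neg at h
      have ht : (Sum.inl (x, true) : FormulaVertex n m) ∈ V2 := by
        by_contra h'
        exact h true (hV1 _ h')
      have hf : (Sum.inl (x, false) : FormulaVertex n m) ∈ V2 := by
        by_contra h'
        exact h false (hV1 _ h')
      have := hcl ht hf (by simp)
      exact this rfl
    choose b hb using hvar
    have hmem : ∀ x : Fin n, ∃ i, Sum.inl (x, b x) ∈ I i := by
      intro x
      have : Sum.inl (x, b x) ∈ ⋃ i, I i := hIu ▸ hb x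
      exact Set.mem_iUnion.1 this
    choose σ hσ using hmem
    have hinj : Function.Injective σ := by
      intro x y hxy
      by_contra hne
      have h1 := hσ x
      have h2 := hσ y
      rw [hxy] at h1
      have := hIind (σ y) h1 h2 (by
        intro h
        rw [Sum.inl.injEq, Prod.mk.injEq] at h
        exact hne h.1)
      exact this hne
    have hsurj : Function.Surjective σ := Finite.surjective_of_injective hinj
    refine ⟨b, fun c => ?_⟩
    have hcv : ∃ j : Fin 2, Sum.inr (c, j) ∈ V1 := by
      by_contra h
      push_neg at h
      have h0 : (Sum.inr (c, 0) : FormulaVertex n m) ∈ V2 := by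
        by_contra h'
        exact h 0 (hV1 _ h')
      have h1 : (Sum.inr (c, 1) : FormulaVertex n m) ∈ V2 := by
        by_contra h'
        exact h 1 (hV1 _ h')
      exact hcl h0 h1 (by simp)
    obtain ⟨j, hj⟩ := hcv
    have : Sum.inr (c, j) ∈ ⋃ i, I i := hIu ▸ hj
    obtain ⟨i, hi⟩ := Set.mem_iUnion.1 this
    obtain ⟨x, rfl⟩ := hsurj i
    have hne : (Sum.inr (c, j) : FormulaVertex n m) ≠ Sum.inl (x, b x) := by
      simp
    have hnadj := hIind (σ x) hi (hσ x) hne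
    have : ¬ ((x, b x) ∉ C c) := hnadj
    exact ⟨(x, b x), not_not.1 this, rfl⟩
end
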